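/- Let X and Y be non-empty forests over an alphabet 𝒳, let c be a cost function over 𝒳 that is non-negative, self-equal, and conforms to the triangular inequality, let x̄_k be an ancestor of (or equal to) x̄_i in X, and let ȳ_l be an ancestor of (or equal to) ȳ_j in Y. Then the subforest edit distance satisfies the intermediate decomposition: D_c(X[i, rl_X(k)], Y[j, rl_Y(l)]) = min { c(x_i, −) + D_c(X[i+1, rl_X(k)], Y[j, rl_Y(l)]); c(−, y_j) + D_c(X[i, rl_X(k)], Y[j+1, rl_Y(l)]); c(x_i, y_j) + D_c(X[i+1, rl_X(i)], Y[j+1, rl_Y(j)]) + D_c(X[rl_X(i)+1, rl_X(k)], Y[rl_Y(j)+1, rl_Y(l)]) }. -/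
import Mathlib


namespace TED

/-- A tree over an alphabet `α`: a label together with a (possibly empty) list of children. -/
inductive PTree (α : Type) where
  | node : α → List (PTree α) → PTree α

/-- A forest over `α` is a finite list of trees; `[]` is the empty forest `ε`. -/
abbrev Forest (α : Type) := List (PTree α)

namespace PTree

/-- The label of (the root of) a tree. -/
def label {α : Type} : PTree α → α
  | node a _ => a

/-- The children of (the root of) a tree. -/
def children {α : Type} : PTree α → List (PTree α)
  | node _ cs => cs

mutual
  /-- The number of nodes of a tree. -/
  def size {α : Type} : PTree α → ℕ
    | node _ cs => 1 + sizeL cs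
  /-- The number of nodes of a forest. -/
  def sizeL {α : Type} : List (PTree α) → ℕ
    | [] => 0
    | t :: ts => size t + sizeL ts
end

mutual
  /-- The pre-order list of all subtrees of a tree. -/
  def subtreesT {α : Type} : PTree α → List (PTree α)
    | node a cs => node a cs :: subtreesL cs
  /-- The pre-order list of all subtrees of a forest. -/
  def subtreesL {α : Type} : List (PTree α) → List (PTree α)
    | [] => []
    | t :: ts => subtreesT t ++ subtreesL ts
end

end PTree

open PTree

/-- The pre-order `π(X)` of a forest: the list of all its subtrees. -/
def preorder {α : Type} (F : Forest α) : List (PTree α) := PTree.subtreesL F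

/-- The size `|X|` of a forest: the length of its pre-order. -/
def fsize {α : Type} (F : Forest α) : ℕ := (preorder F).length

/-- The `i`-th subtree `x̄_i` (1-indexed pre-order) of a forest, if it exists. -/
def treeAt {α : Type} (F : Forest α) (i : ℕ) : Option (PTree α) := (preorder F)[i - 1]?

/-- The label `x_i` of the `i`-th subtree, as an element of `𝒳 ∪ {−}`
(`none` plays the role of the gap symbol `−`). -/
def labelAt {α : Type} (F : Forest α) (i : ℕ) : Option α := (treeAt F i).map PTree.label

/-- The number of nodes of the `i`-th subtree `x̄_i`. -/
def sizeAt {α : Type} (F : Forest α) (i : ℕ) : ℕ := ((treeAt F i).map PTree.size).getD 0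

/-- A cost function over `α`: a real-valued function on `(𝒳 ∪ {−}) × (𝒳 ∪ {−})`,
where the gap symbol `−` is modelled by `none`. -/
abbrev Cost (α : Type) := Option α → Option α → ℝ

/-- `c` is non-negative. -/
def Nonneg {α : Type} (c : Cost α) : Prop := ∀ x y, 0 ≤ c x y
/-- `c` is self-equal. -/
def SelfEq {α : Type} (c : Cost α) : Prop := ∀ x, c x x = 0
/-- `c` is discernible. -/
def Discernible {α : Type} (c : Cost α) : Prop := ∀ x y, x ≠ y → 0 < c x y
/-- `c` is symmetric. -/
def Symm {α : Type} (c : Cost α) : Prop := ∀ x y, c x y = c y x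
/-- `c` conforms to the triangular inequality. -/
def Triangle {α : Type} (c : Cost α) : Prop := ∀ x y z, c x z ≤ c x y + c y z

/-- Deletion of the first root: its children are spliced into its place. -/
def delRoot {α : Type} : Forest α → Forest α
  | [] => []
  | PTree.node _ cs :: ts => cs ++ ts

/-- Replacement of the label of the first root by `y`. -/
def repRoot {α : Type} (y : α) : Forest α → Forest α
  | [] => []
  | PTree.node _ cs :: ts => PTree.node y cs :: ts

/-- Insertion of a new root labeled `y` at root level, adopting the trees
`l` to `r-1` of the forest as its children. -/
def insRoot {α : Type} (y : α) (l r : ℕ) (F : Forest α) : Forest α :=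
  if r > F.length + 1 ∨ l > r ∨ l < 1 then F
  else if l = r then F.take (l - 1) ++ [PTree.node y []] ++ F.drop (l - 1)
  else F.take (l - 1) ++ [PTree.node y ((F.drop (l - 1)).take (r - l))] ++ F.drop (r - 1)

/-- `del_i`: deletion of the node with pre-order index `i`. -/
def applyDel {α : Type} : ℕ → Forest α → Forest α
  | _, [] => []
  | i, PTree.node a cs :: ts =>
    if i < 1 then PTree.node a cs :: ts
    else if i = 1 then delRoot (PTree.node a cs :: ts)
    else if i ≤ size (PTree.node a cs) then PTree.node a (applyDel (i - 1) cs) :: ts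
    else PTree.node a cs :: applyDel (i - size (PTree.node a cs)) ts
  termination_by _ F => sizeOf F

/-- `rep_{i,y}`: replacement of the label of the node with pre-order index `i` by `y`. -/
def applyRep {α : Type} (y : α) : ℕ → Forest α → Forest α
  | _, [] => []
  | i, PTree.node a cs :: ts =>
    if i < 1 then PTree.node a cs :: ts
    else if i = 1 then repRoot y (PTree.node a cs :: ts)
    else if i ≤ size (PTree.node a cs) then PTree.node a (applyRep y (i - 1) cs) :: ts
    else PTree.node a cs :: applyRep y (i - size (PTree.node a cs)) ts
  termination_by _ F => sizeOf F

/-- `ins_{i,y,l,r}`: insertion of a node labeled `y` as a child of the node with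
pre-order index `i` (at root level if `i = 0`), adopting that node's children
`l` through `r-1` as its children. -/
def applyIns {α : Type} (y : α) (l r : ℕ) : ℕ → Forest α → Forest α
  | 0, F => insRoot y l r F
  | _ + 1, [] => []
  | i + 1, PTree.node a cs :: ts =>
    if i + 1 ≤ size (PTree.node a cs) then PTree.node a (applyIns y l r i cs) :: ts
    else PTree.node a cs :: applyIns y l r (i + 1 - size (PTree.node a cs)) ts
  termination_by _ F => sizeOf F

/-- The standard edits: deletions `del_i`, replacements `rep_{i,y}` and
insertions `ins_{i,y,l,r}`. -/
inductive Edit (α : Type) where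
  | del (i : ℕ)
  | rep (i : ℕ) (y : α)
  | ins (i : ℕ) (y : α) (l r : ℕ)

/-- Application of a single edit to a forest. -/
def Edit.apply {α : Type} : Edit α → Forest α → Forest α
  | .del i, F => applyDel i F
  | .rep i y, F => applyRep y i F
  | .ins i y l r, F => applyIns y l r i F

/-- Application of an edit script `δ̄ = δ₁,…,δ_T` to a forest (left to right). -/
def applyScript {α : Type} (δ : List (Edit α)) (F : Forest α) : Forest α :=
  δ.foldl (fun F e => e.apply F) F

open Classical in
/-- The cost of a single edit with respect to the forest it is applied to:
`0` if the edit leaves the forest unchanged, and otherwise `c(x_i, y)` for a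
replacement, `c(x_i, −)` for a deletion and `c(−, y)` for an insertion. -/
noncomputable def editCost {α : Type} (c : Cost α) (e : Edit α) (F : Forest α) : ℝ :=
  if e.apply F = F then 0
  else
    match e with
    | .del i => c (labelAt F i) none
    | .rep i y => c (labelAt F i) (some y)
    | .ins _ y _ _ => c none (some y)

/-- The cost `c(δ̄, X)` of an edit script: the sum of the costs of its edits,
each evaluated on the forest to which it is applied. -/
noncomputable def scriptCost {α : Type} (c : Cost α) : List (Edit α) → Forest α → ℝ
  | [], _ => 0
  | e :: es, F => editCost c e F + scriptCost c es (e.apply F)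

/-- The (subforest) edit distance `D_c(F, G)`: the infimum of the costs of edit
scripts transforming `F` into `G`. -/
noncomputable def fdist {α : Type} (c : Cost α) (F G : Forest α) : ℝ :=
  sInf { r : ℝ | ∃ δ : List (Edit α), applyScript δ F = G ∧ scriptCost c δ F = r }

/-- The generalized tree edit distance `d_c(x̄, ȳ)` between two trees. -/
noncomputable def ted {α : Type} (c : Cost α) (x y : PTree α) : ℝ := fdist c [x] [y]

/-- `x̄_k` is a (proper) ancestor of `x̄_i`, expressed via 1-indexed pre-order indices:
the descendants of `x̄_k` occupy exactly the pre-order indices `k+1, …, k + |x̄_k| - 1`. -/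
def AncestorIdx {α : Type} (F : Forest α) (k i : ℕ) : Prop :=
  k < i ∧ i < k + sizeAt F k

/-- A tree mapping between two forests: a set `M ⊆ {1,…,|F|} × {1,…,|G|}` such that
for all `(i,j), (i',j') ∈ M` we have `i = i' ↔ j = j'`, `i ≤ i' ↔ j ≤ j'`, and
`x̄_i` is an ancestor of `x̄_{i'}` iff `ȳ_j` is an ancestor of `ȳ_{j'}`. -/
def IsTreeMapping {α : Type} (F G : Forest α) (M : Finset (ℕ × ℕ)) : Prop :=
  (∀ p ∈ M, 1 ≤ p.1 ∧ p.1 ≤ fsize F ∧ 1 ≤ p.2 ∧ p.2 ≤ fsize G) ∧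
  (∀ p ∈ M, ∀ q ∈ M,
    (p.1 = q.1 ↔ p.2 = q.2) ∧
    (p.1 ≤ q.1 ↔ p.2 ≤ q.2) ∧
    (AncestorIdx F p.1 q.1 ↔ AncestorIdx G p.2 q.2))

/-- The cost `c(M, X, Y)` of a tree mapping: the sum of the replacement costs of
the mapped pairs, the deletion costs of the unmapped nodes of `X`, and the
insertion costs of the unmapped nodes of `Y`. -/
noncomputable def mapCost {α : Type} (c : Cost α) (F G : Forest α) (M : Finset (ℕ × ℕ)) : ℝ :=
  (∑ p ∈ M, c (labelAt F p.1) (labelAt G p.2))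
  + (∑ i ∈ (Finset.Icc 1 (fsize F)).filter (fun i => ∀ p ∈ M, p.1 ≠ i), c (labelAt F i) none)
  + (∑ j ∈ (Finset.Icc 1 (fsize G)).filter (fun j => ∀ p ∈ M, p.2 ≠ j), c none (labelAt G j))

/-- A co-optimal tree mapping: a tree mapping of minimum cost. -/
def IsCoOptimal {α : Type} (c : Cost α) (F G : Forest α) (M : Finset (ℕ × ℕ)) : Prop :=
  IsTreeMapping F G M ∧
  ∀ M' : Finset (ℕ × ℕ), IsTreeMapping F G M' → mapCost c F G M ≤ mapCost c F G M'

mutual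
  /-- The 1-indexed pre-order position of the rightmost leaf within a tree. -/
  def rlIdx {α : Type} : PTree α → ℕ
    | .node _ cs => rlGo 1 cs
  /-- Helper: the pre-order position of the rightmost leaf of the last tree of a
  forest, where `acc` pre-order positions precede the forest. -/
  def rlGo {α : Type} : ℕ → List (PTree α) → ℕ
    | acc, [] => acc
    | acc, [t] => acc + rlIdx t
    | acc, t :: ts => rlGo (acc + size t) ts
end

/-- The outermost right leaf `rl_X(i)`: the pre-order index of the rightmost leaf
of the subtree `x̄_i`. -/
def rlAt {α : Type} (F : Forest α) (i : ℕ) : ℕ :=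
  match treeAt F i with
  | some t => i + rlIdx t - 1
  | none => i

/-- Helper for the subforest extraction: keeps the nodes with pre-order indices
between `i` and `j` (preserving ancestral structure); `k` is the pre-order index
of the last node already visited. -/
def subAux {α : Type} : Forest α → ℕ → ℕ → ℕ → Forest α × ℕ
  | [], _, _, k => ([], k)
  | PTree.node a cs :: ts, i, j, k =>
    if k + 1 > j then ([], k + 1)
    else if k + 1 ≥ i then
      let P := subAux cs i j (k + 1)
      let Q := subAux ts i j P.2
      (PTree.node a P.1 :: Q.1, Q.2)
    else
      let P := subAux cs i j (k + 1)
      let Q := subAux ts i j P.2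
      (P.1 ++ Q.1, Q.2)
  termination_by F _ _ _ => sizeOf F

/-- The subforest `X[i, j]`: the restriction of `X` to the nodes with pre-order
indices `i, …, j`, preserving the ancestral structure among them. -/
def subforest {α : Type} (F : Forest α) (i j : ℕ) : Forest α := (subAux F i j 0).1

/-! ### Basic lemmas -/

section Dev
variable {α : Type}

@[simp] lemma sizeL_nil : sizeL ([] : Forest α) = 0 := rfl
@[simp] lemma sizeL_cons (t : PTree α) (ts : Forest α) :
    sizeL (t :: ts) = size t + sizeL ts := rfl
@[simp] lemma size_node (a : α) (cs : Forest α) :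
    size (PTree.node a cs) = 1 + sizeL cs := rfl

@[simp] lemma sizeL_append (A B : Forest α) : sizeL (A ++ B) = sizeL A + sizeL B := by
  induction A with
  | nil => simp
  | cons t ts ih => simp only [sizeL_cons, List.cons_append, ih]; ring

lemma size_pos (t : PTree α) : 1 ≤ size t := by
  cases t with | node a cs => simp only [size_node]; omega

@[simp] lemma subtreesL_nil : subtreesL ([] : Forest α) = [] := rfl
@[simp] lemma subtreesL_cons (t : PTree α) (ts : Forest α) :
    subtreesL (t :: ts) = subtreesT t ++ subtreesL ts := rfl
@[simp] lemma subtreesT_node (a : α) (cs : Forest α) :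
    subtreesT (PTree.node a cs) = PTree.node a cs :: subtreesL cs := rfl

@[simp] lemma subtreesL_append (A B : Forest α) :
    subtreesL (A ++ B) = subtreesL A ++ subtreesL B := by
  induction A with
  | nil => simp
  | cons t ts ih => simp [ih]

mutual
lemma length_subtreesT (t : PTree α) : (subtreesT t).length = size t := by
  cases t with
  | node a cs => simp [length_subtreesL cs]; omega
lemma length_subtreesL (F : Forest α) : (subtreesL F).length = sizeL F := by
  cases F with
  | nil => rfl
  | cons t ts => simp [length_subtreesT t, length_subtreesL ts]
end

@[simp] lemma fsize_eq_sizeL (F : Forest α) : fsize F = sizeL F := by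
  simp [fsize, preorder, length_subtreesL]

lemma preorder_cons (a : α) (cs ts : Forest α) :
    preorder (PTree.node a cs :: ts) = PTree.node a cs :: preorder (cs ++ ts) := by
  simp [preorder]

lemma treeAt_cons_one (a : α) (cs ts : Forest α) :
    treeAt (PTree.node a cs :: ts) 1 = some (PTree.node a cs) := by
  simp [treeAt, preorder]

lemma treeAt_cons_of_ge_two (a : α) (cs ts : Forest α) (i : ℕ) (hi : 2 ≤ i) :
    treeAt (PTree.node a cs :: ts) i = treeAt (cs ++ ts) (i - 1) := by
  simp only [treeAt, preorder_cons]
  have h1 : i - 1 = (i - 2) + 1 := by omega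
  rw [h1, List.getElem?_cons_succ]
  congr 1 <;> omega

lemma labelAt_cons_one (a : α) (cs ts : Forest α) :
    labelAt (PTree.node a cs :: ts) 1 = some a := by
  simp [labelAt, treeAt_cons_one, PTree.label]

lemma labelAt_cons_of_ge_two (a : α) (cs ts : Forest α) (i : ℕ) (hi : 2 ≤ i) :
    labelAt (PTree.node a cs :: ts) i = labelAt (cs ++ ts) (i - 1) := by
  simp [labelAt, treeAt_cons_of_ge_two a cs ts i hi]

lemma treeAt_append_left (A B : Forest α) (i : ℕ) (h1 : 1 ≤ i) (h2 : i ≤ sizeL A) :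
    treeAt (A ++ B) i = treeAt A i := by
  simp only [treeAt, preorder, subtreesL_append]
  rw [List.getElem?_append_left]
  rw [length_subtreesL]; omega

lemma treeAt_append_right (A B : Forest α) (i : ℕ) (h2 : sizeL A < i) :
    treeAt (A ++ B) i = treeAt B (i - sizeL A) := by
  simp only [treeAt, preorder, subtreesL_append]
  rw [List.getElem?_append_right]
  · congr 1; rw [length_subtreesL]; omega
  · rw [length_subtreesL]; omega

lemma labelAt_append_left (A B : Forest α) (i : ℕ) (h1 : 1 ≤ i) (h2 : i ≤ sizeL A) :
    labelAt (A ++ B) i = labelAt A i := by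
  simp [labelAt, treeAt_append_left A B i h1 h2]

lemma labelAt_append_right (A B : Forest α) (i : ℕ) (h2 : sizeL A < i) :
    labelAt (A ++ B) i = labelAt B (i - sizeL A) := by
  simp [labelAt, treeAt_append_right A B i h2]

lemma treeAt_isSome (F : Forest α) (i : ℕ) (h1 : 1 ≤ i) (h2 : i ≤ fsize F) :
    ∃ t, treeAt F i = some t := by
  have : i - 1 < (preorder F).length := by simp [fsize] at h2 ⊢; omega
  exact ⟨(preorder F)[i-1], by simp [treeAt, List.getElem?_eq_getElem this]⟩



/-! ### The recurrence function `dd` -/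

noncomputable def dd (c : Cost α) : Forest α → Forest α → ℝ
  | [], [] => 0
  | PTree.node a cs :: ts, [] => c (some a) none + dd c (cs ++ ts) []
  | [], PTree.node b ds :: us => c none (some b) + dd c [] (ds ++ us)
  | PTree.node a cs :: ts, PTree.node b ds :: us =>
      min (c (some a) none + dd c (cs ++ ts) (PTree.node b ds :: us))
        (min (c none (some b) + dd c (PTree.node a cs :: ts) (ds ++ us))
          (c (some a) (some b) + dd c cs ds + dd c ts us))
  termination_by F G => sizeL F + sizeL G
  decreasing_by all_goals simp only [sizeL_append, sizeL_cons, size_node] <;> omega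

lemma dd_nil_nil (c : Cost α) : dd c [] [] = 0 := by rw [dd]

lemma dd_cons_nil (c : Cost α) (a : α) (cs ts : Forest α) :
    dd c (PTree.node a cs :: ts) [] = c (some a) none + dd c (cs ++ ts) [] := by rw [dd]

lemma dd_nil_cons (c : Cost α) (b : α) (ds us : Forest α) :
    dd c [] (PTree.node b ds :: us) = c none (some b) + dd c [] (ds ++ us) := by rw [dd]

lemma dd_cons_cons (c : Cost α) (a b : α) (cs ts ds us : Forest α) :
    dd c (PTree.node a cs :: ts) (PTree.node b ds :: us) =
      min (c (some a) none + dd c (cs ++ ts) (PTree.node b ds :: us))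
        (min (c none (some b) + dd c (PTree.node a cs :: ts) (ds ++ us))
          (c (some a) (some b) + dd c cs ds + dd c ts us)) := by rw [dd]

lemma dd_nonneg (c : Cost α) (hnn : Nonneg c) (F G : Forest α) : 0 ≤ dd c F G := by
  rcases F with _ | ⟨⟨a, cs⟩, ts⟩ <;> rcases G with _ | ⟨⟨b, ds⟩, us⟩
  · rw [dd_nil_nil]
  · rw [dd_nil_cons]
    have := dd_nonneg c hnn ([] : Forest α) (ds ++ us)
    have := hnn none (some b); linarith
  · rw [dd_cons_nil]
    have := dd_nonneg c hnn (cs ++ ts) ([] : Forest α)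
    have := hnn (some a) none; linarith
  · rw [dd_cons_cons]
    have h1 := dd_nonneg c hnn (cs ++ ts) (PTree.node b ds :: us)
    have h2 := dd_nonneg c hnn (PTree.node a cs :: ts) (ds ++ us)
    have h3 := dd_nonneg c hnn cs ds
    have h4 := dd_nonneg c hnn ts us
    have := hnn (some a) none
    have := hnn none (some b)
    have := hnn (some a) (some b)
    simp only [le_min_iff]
    constructor; · linarith
    constructor <;> linarith
  termination_by sizeL F + sizeL G
  decreasing_by all_goals simp only [sizeL_append, sizeL_cons, size_node] <;> omega

lemma dd_self (c : Cost α) (hnn : Nonneg c) (hse : SelfEq c) (F : Forest α) :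
    dd c F F = 0 := by
  rcases F with _ | ⟨⟨a, cs⟩, ts⟩
  · rw [dd_nil_nil]
  · have h0 := dd_nonneg c hnn (PTree.node a cs :: ts) (PTree.node a cs :: ts)
    rw [dd_cons_cons] at h0 ⊢
    apply le_antisymm _ h0
    · calc min _ _ ≤ c (some a) (some a) + dd c cs cs + dd c ts ts :=
            le_trans (min_le_right _ _) (min_le_right _ _)
        _ = 0 := by rw [hse, dd_self c hnn hse cs, dd_self c hnn hse ts]; ring
  termination_by sizeL F
  decreasing_by all_goals simp only [sizeL_cons, size_node] <;> omega

lemma min3_le_add_min3 {a1 a2 a3 b1 b2 b3 K : ℝ} (h1 : a1 ≤ K + b1) (h2 : a2 ≤ K + b2)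
    (h3 : a3 ≤ K + b3) : min a1 (min a2 a3) ≤ K + min b1 (min b2 b3) := by
  have hb : min b1 (min b2 b3) = b1 ∨ min b1 (min b2 b3) = b2 ∨ min b1 (min b2 b3) = b3 := by
    rcases min_choice b1 (min b2 b3) with h | h
    · exact Or.inl h
    · rcases min_choice b2 b3 with h2 | h2
      · exact Or.inr (Or.inl (h.trans h2))
      · exact Or.inr (Or.inr (h.trans h2))
  rcases hb with h | h | h <;> rw [h]
  · exact le_trans (min_le_left _ _) h1
  · exact le_trans (le_trans (min_le_right _ _) (min_le_left _ _)) h2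
  · exact le_trans (le_trans (min_le_right _ _) (min_le_right _ _)) h3

/-! ### Lemmas on the edit operations -/

lemma applyDel_nil (i : ℕ) : applyDel i ([] : Forest α) = [] := by rw [applyDel]

lemma applyDel_zero (F : Forest α) (i : ℕ) (h : i < 1) : applyDel i F = F := by
  cases F with
  | nil => rw [applyDel]
  | cons t ts => cases t with | node a cs => rw [applyDel]; simp [h]

lemma applyDel_one (a : α) (cs ts : Forest α) :
    applyDel 1 (PTree.node a cs :: ts) = cs ++ ts := by
  rw [applyDel]; simp [delRoot]

lemma applyDel_cons_left (i : ℕ) (a : α) (cs ts : Forest α) (h2 : 2 ≤ i)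
    (h : i ≤ size (PTree.node a cs)) :
    applyDel i (PTree.node a cs :: ts) = PTree.node a (applyDel (i - 1) cs) :: ts := by
  rw [applyDel]
  rw [if_neg (by omega), if_neg (by omega), if_pos h]

lemma applyDel_cons_right (i : ℕ) (a : α) (cs ts : Forest α)
    (h : size (PTree.node a cs) < i) :
    applyDel i (PTree.node a cs :: ts) =
      PTree.node a cs :: applyDel (i - size (PTree.node a cs)) ts := by
  have h1 : 1 ≤ size (PTree.node a cs) := size_pos _
  rw [applyDel]
  rw [if_neg (by omega), if_neg (by omega), if_neg (by omega)]

lemma applyDel_oob (F : Forest α) (i : ℕ) (h : sizeL F < i) : applyDel i F = F := by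
  induction F generalizing i with
  | nil => exact applyDel_nil i
  | cons t ts ih =>
    cases t with | node a cs =>
    have hs : 1 ≤ size (PTree.node a cs) := size_pos _
    simp only [sizeL_cons] at h
    rw [applyDel_cons_right i a cs ts (by omega)]
    rw [ih _ (by omega)]

lemma applyDel_not_in_range (F : Forest α) (i : ℕ) (h : ¬(1 ≤ i ∧ i ≤ sizeL F)) :
    applyDel i F = F := by
  rcases Nat.lt_or_ge i 1 with h1 | h1
  · exact applyDel_zero F i h1
  · exact applyDel_oob F i (by omega)

lemma applyDel_append_left (A B : Forest α) (p : ℕ) (h1 : 1 ≤ p) (h2 : p ≤ sizeL A) :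
    applyDel p (A ++ B) = applyDel p A ++ B := by
  induction A generalizing p with
  | nil => simp at h2; omega
  | cons t ts ih =>
    cases t with | node a cs =>
    rcases Nat.eq_or_lt_of_le h1 with h | h
    · rw [← h, List.cons_append, applyDel_one, applyDel_one, List.append_assoc]
    · simp only [sizeL_cons] at h2
      by_cases hc : p ≤ size (PTree.node a cs)
      · rw [List.cons_append, applyDel_cons_left p a cs (ts ++ B) (by omega) hc,
          applyDel_cons_left p a cs ts (by omega) hc, List.cons_append]
      · rw [List.cons_append, applyDel_cons_right p a cs (ts ++ B) (by omega),
          applyDel_cons_right p a cs ts (by omega), List.cons_append]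
        rw [ih _ (by omega) (by omega)]

lemma applyDel_append_right (A B : Forest α) (p : ℕ) (h2 : sizeL A < p) :
    applyDel p (A ++ B) = A ++ applyDel (p - sizeL A) B := by
  induction A generalizing p with
  | nil => simp
  | cons t ts ih =>
    cases t with | node a cs =>
    simp only [sizeL_cons] at h2
    have hs : 1 ≤ size (PTree.node a cs) := size_pos _
    have hidx : p - sizeL (PTree.node a cs :: ts) = p - size (PTree.node a cs) - sizeL ts := by
      simp only [sizeL_cons]; omega
    rw [List.cons_append, applyDel_cons_right p a cs (ts ++ B) (by omega),
      ih _ (by omega), hidx, List.cons_append]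

lemma applyRep_nil (y : α) (i : ℕ) : applyRep y i ([] : Forest α) = [] := by rw [applyRep]

lemma applyRep_zero (y : α) (F : Forest α) (i : ℕ) (h : i < 1) : applyRep y i F = F := by
  cases F with
  | nil => rw [applyRep]
  | cons t ts => cases t with | node a cs => rw [applyRep]; simp [h]

lemma applyRep_one (y a : α) (cs ts : Forest α) :
    applyRep y 1 (PTree.node a cs :: ts) = PTree.node y cs :: ts := by
  rw [applyRep]; simp [repRoot]

lemma applyRep_cons_left (y : α) (i : ℕ) (a : α) (cs ts : Forest α) (h2 : 2 ≤ i)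
    (h : i ≤ size (PTree.node a cs)) :
    applyRep y i (PTree.node a cs :: ts) = PTree.node a (applyRep y (i - 1) cs) :: ts := by
  rw [applyRep]
  rw [if_neg (by omega), if_neg (by omega), if_pos h]

lemma applyRep_cons_right (y : α) (i : ℕ) (a : α) (cs ts : Forest α)
    (h : size (PTree.node a cs) < i) :
    applyRep y i (PTree.node a cs :: ts) =
      PTree.node a cs :: applyRep y (i - size (PTree.node a cs)) ts := by
  have h1 : 1 ≤ size (PTree.node a cs) := size_pos _
  rw [applyRep]
  rw [if_neg (by omega), if_neg (by omega), if_neg (by omega)]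

lemma applyRep_oob (y : α) (F : Forest α) (i : ℕ) (h : sizeL F < i) : applyRep y i F = F := by
  induction F generalizing i with
  | nil => exact applyRep_nil y i
  | cons t ts ih =>
    cases t with | node a cs =>
    have hs : 1 ≤ size (PTree.node a cs) := size_pos _
    simp only [sizeL_cons] at h
    rw [applyRep_cons_right y i a cs ts (by omega)]
    rw [ih _ (by omega)]

lemma applyRep_not_in_range (y : α) (F : Forest α) (i : ℕ) (h : ¬(1 ≤ i ∧ i ≤ sizeL F)) :
    applyRep y i F = F := by
  rcases Nat.lt_or_ge i 1 with h1 | h1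
  · exact applyRep_zero y F i h1
  · exact applyRep_oob y F i (by omega)

lemma applyRep_append_left (y : α) (A B : Forest α) (p : ℕ) (h1 : 1 ≤ p) (h2 : p ≤ sizeL A) :
    applyRep y p (A ++ B) = applyRep y p A ++ B := by
  induction A generalizing p with
  | nil => simp at h2; omega
  | cons t ts ih =>
    cases t with | node a cs =>
    rcases Nat.eq_or_lt_of_le h1 with h | h
    · rw [← h, List.cons_append, applyRep_one, applyRep_one, List.cons_append]
    · simp only [sizeL_cons] at h2
      by_cases hc : p ≤ size (PTree.node a cs)
      · rw [List.cons_append, applyRep_cons_left y p a cs (ts ++ B) (by omega) hc,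
          applyRep_cons_left y p a cs ts (by omega) hc, List.cons_append]
      · rw [List.cons_append, applyRep_cons_right y p a cs (ts ++ B) (by omega),
          applyRep_cons_right y p a cs ts (by omega), List.cons_append]
        rw [ih _ (by omega) (by omega)]

lemma applyRep_append_right (y : α) (A B : Forest α) (p : ℕ) (h2 : sizeL A < p) :
    applyRep y p (A ++ B) = A ++ applyRep y (p - sizeL A) B := by
  induction A generalizing p with
  | nil => simp
  | cons t ts ih =>
    cases t with | node a cs =>
    simp only [sizeL_cons] at h2
    have hs : 1 ≤ size (PTree.node a cs) := size_pos _
    have hidx : p - sizeL (PTree.node a cs :: ts) = p - size (PTree.node a cs) - sizeL ts := by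
      simp only [sizeL_cons]; omega
    rw [List.cons_append, applyRep_cons_right y p a cs (ts ++ B) (by omega),
      ih _ (by omega), hidx, List.cons_append]

/-! ### Insertion lemmas -/

lemma applyIns_zero (y : α) (l r : ℕ) (F : Forest α) :
    applyIns y l r 0 F = insRoot y l r F := by rw [applyIns]

lemma applyIns_nil (y : α) (l r m : ℕ) : applyIns y l r (m + 1) ([] : Forest α) = [] := by
  rw [applyIns]

lemma applyIns_cons_left (y : α) (l r m : ℕ) (a : α) (cs ts : Forest α)
    (h : m + 1 ≤ size (PTree.node a cs)) :
    applyIns y l r (m + 1) (PTree.node a cs :: ts) =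
      PTree.node a (applyIns y l r m cs) :: ts := by
  rw [applyIns, if_pos h]

lemma applyIns_cons_right (y : α) (l r m : ℕ) (a : α) (cs ts : Forest α)
    (h : size (PTree.node a cs) < m + 1) :
    applyIns y l r (m + 1) (PTree.node a cs :: ts) =
      PTree.node a cs :: applyIns y l r (m + 1 - size (PTree.node a cs)) ts := by
  rw [applyIns, if_neg (by omega)]

lemma applyIns_oob (y : α) (l r : ℕ) (F : Forest α) (m : ℕ) (h1 : 1 ≤ m) (h : sizeL F < m) :
    applyIns y l r m F = F := by
  induction F generalizing m with
  | nil =>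
    obtain ⟨m', rfl⟩ : ∃ m', m = m' + 1 := ⟨m - 1, by omega⟩
    exact applyIns_nil y l r m'
  | cons t ts ih =>
    cases t with | node a cs =>
    obtain ⟨m', rfl⟩ : ∃ m', m = m' + 1 := ⟨m - 1, by omega⟩
    have hs : 1 ≤ size (PTree.node a cs) := size_pos _
    simp only [sizeL_cons] at h
    rw [applyIns_cons_right y l r m' a cs ts (by omega)]
    rw [ih _ (by omega) (by omega)]

lemma insRoot_build (b : α) (ds us : Forest α) :
    insRoot b 1 (ds.length + 1) (ds ++ us) = PTree.node b ds :: us := by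
  unfold insRoot
  rw [if_neg (by push_neg; refine ⟨by simp only [List.length_append]; omega, by omega, by omega⟩)]
  by_cases h : ds = []
  · subst h
    simp
  · rw [if_neg (by simpa [List.length_eq_zero_iff] using h)]
    simp [List.take_left, List.drop_left]

lemma applyDel_at_prefix (A B : Forest α) (y : α) (cs : Forest α) :
    applyDel (sizeL A + 1) (A ++ PTree.node y cs :: B) = A ++ (cs ++ B) := by
  induction A with
  | nil => simpa using applyDel_one y cs B
  | cons t ts ih =>
    cases t with | node a as =>
    have hs : 1 ≤ size (PTree.node a as) := size_pos _
    rw [List.cons_append, applyDel_cons_right _ a as _ (by simp only [sizeL_cons]; omega)]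
    have hidx : sizeL (PTree.node a as :: ts) + 1 - size (PTree.node a as) = sizeL ts + 1 := by
      simp only [sizeL_cons]; omega
    rw [hidx, ih, List.cons_append]

lemma labelAt_at_prefix (A B : Forest α) (y : α) (cs : Forest α) :
    labelAt (A ++ PTree.node y cs :: B) (sizeL A + 1) = some y := by
  rw [labelAt_append_right A _ _ (by omega)]
  have : sizeL A + 1 - sizeL A = 1 := by omega
  rw [this, labelAt_cons_one]

lemma insRoot_inverse (y : α) (l r : ℕ) (F : Forest α) :
    insRoot y l r F = F ∨
      ∃ p, 1 ≤ p ∧ p ≤ sizeL (insRoot y l r F) ∧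
        applyDel p (insRoot y l r F) = F ∧ labelAt (insRoot y l r F) p = some y := by
  unfold insRoot
  by_cases hg : r > F.length + 1 ∨ l > r ∨ l < 1
  · rw [if_pos hg]; exact Or.inl rfl
  rw [if_neg hg]
  push_neg at hg
  obtain ⟨hr, hlr, hl⟩ := hg
  by_cases hlr' : l = r
  · rw [if_pos hlr']
    refine Or.inr ⟨sizeL (F.take (l-1)) + 1, by omega, ?_, ?_, ?_⟩
    · simp only [List.append_assoc, sizeL_append, sizeL_cons, List.singleton_append, size_node,
        sizeL_nil]
      omega
    · rw [List.append_assoc, List.singleton_append, applyDel_at_prefix]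
      simp [List.take_append_drop]
    · rw [List.append_assoc, List.singleton_append, labelAt_at_prefix]
  · rw [if_neg hlr']
    refine Or.inr ⟨sizeL (F.take (l-1)) + 1, by omega, ?_, ?_, ?_⟩
    · simp only [List.append_assoc, sizeL_append, sizeL_cons, List.singleton_append, size_node,
        sizeL_nil]
      omega
    · rw [List.append_assoc, List.singleton_append, applyDel_at_prefix]
      have hdd : F.drop (r - 1) = (F.drop (l-1)).drop (r - l) := by
        rw [List.drop_drop]
        congr 1
        omega
      rw [hdd, List.take_append_drop, List.take_append_drop]
    · rw [List.append_assoc, List.singleton_append, labelAt_at_prefix]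

lemma applyIns_inverse (y : α) (l r m : ℕ) (F : Forest α) :
    applyIns y l r m F = F ∨
      ∃ p, 1 ≤ p ∧ p ≤ sizeL (applyIns y l r m F) ∧
        applyDel p (applyIns y l r m F) = F ∧ labelAt (applyIns y l r m F) p = some y := by
  rcases m with _ | m'
  · rw [applyIns_zero]
    exact insRoot_inverse y l r F
  rcases F with _ | ⟨⟨a, cs⟩, ts⟩
  · exact Or.inl (applyIns_nil y l r m')
  by_cases hc : m' + 1 ≤ size (PTree.node a cs)
  · rw [applyIns_cons_left y l r m' a cs ts hc]
    rcases applyIns_inverse y l r m' cs with h | ⟨p, hp1, hp2, hdel, hlab⟩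
    · rw [h]; exact Or.inl rfl
    · set G' := applyIns y l r m' cs with hG'
      refine Or.inr ⟨p + 1, by omega, ?_, ?_, ?_⟩
      · simp only [sizeL_cons, size_node]; omega
      · rw [applyDel_cons_left (p+1) a G' ts (by omega) (by simp only [size_node]; omega)]
        simp only [Nat.add_sub_cancel]
        rw [hdel]
      · rw [labelAt_cons_of_ge_two a G' ts (p+1) (by omega)]
        simp only [Nat.add_sub_cancel]
        rw [labelAt_append_left G' ts p hp1 hp2]
        exact hlab
  · rw [applyIns_cons_right y l r m' a cs ts (by omega)]
    rcases applyIns_inverse y l r (m' + 1 - size (PTree.node a cs)) ts with h | ⟨p, hp1, hp2, hdel, hlab⟩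
    · rw [h]; exact Or.inl rfl
    · set T' := applyIns y l r (m' + 1 - size (PTree.node a cs)) ts with hT'
      have hs : 1 ≤ size (PTree.node a cs) := size_pos _
      refine Or.inr ⟨p + size (PTree.node a cs), by omega, ?_, ?_, ?_⟩
      · simp only [sizeL_cons]; omega
      · rw [applyDel_cons_right _ a cs T' (by omega)]
        simp only [Nat.add_sub_cancel]
        rw [hdel]
      · rw [labelAt_cons_of_ge_two a cs T' _ (by omega)]
        rw [labelAt_append_right cs T' _ (by simp only [size_node] at hs ⊢; omega)]
        have : p + size (PTree.node a cs) - 1 - sizeL cs = p := by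
          simp only [size_node]; omega
        rw [this]
        exact hlab
  termination_by sizeL F
  decreasing_by all_goals simp only [sizeL_cons, size_node] <;> omega

/-! ### Scripts and `fdist` basics -/

lemma applyScript_nil (F : Forest α) : applyScript ([] : List (Edit α)) F = F := rfl

lemma applyScript_cons (e : Edit α) (δ : List (Edit α)) (F : Forest α) :
    applyScript (e :: δ) F = applyScript δ (e.apply F) := rfl

lemma applyScript_append (δ₁ δ₂ : List (Edit α)) (F : Forest α) :
    applyScript (δ₁ ++ δ₂) F = applyScript δ₂ (applyScript δ₁ F) := by
  simp [applyScript, List.foldl_append]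

lemma scriptCost_nil (c : Cost α) (F : Forest α) : scriptCost c [] F = 0 := rfl

lemma scriptCost_cons (c : Cost α) (e : Edit α) (δ : List (Edit α)) (F : Forest α) :
    scriptCost c (e :: δ) F = editCost c e F + scriptCost c δ (e.apply F) := rfl

lemma scriptCost_append (c : Cost α) (δ₁ δ₂ : List (Edit α)) (F : Forest α) :
    scriptCost c (δ₁ ++ δ₂) F = scriptCost c δ₁ F + scriptCost c δ₂ (applyScript δ₁ F) := by
  induction δ₁ generalizing F with
  | nil => simp [scriptCost_nil, applyScript_nil]
  | cons e δ ih =>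
    rw [List.cons_append, scriptCost_cons, scriptCost_cons, ih, applyScript_cons]
    ring

lemma editCost_nonneg (c : Cost α) (hnn : Nonneg c) (e : Edit α) (F : Forest α) :
    0 ≤ editCost c e F := by
  unfold editCost
  split
  · exact le_refl 0
  · rcases e with i | ⟨i, y⟩ | ⟨i, y, l, r⟩ <;> exact hnn _ _

lemma scriptCost_nonneg (c : Cost α) (hnn : Nonneg c) (δ : List (Edit α)) (F : Forest α) :
    0 ≤ scriptCost c δ F := by
  induction δ generalizing F with
  | nil => simp [scriptCost_nil]
  | cons e δ ih =>
    rw [scriptCost_cons]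
    have := editCost_nonneg c hnn e F
    have := ih (e.apply F)
    linarith

lemma editCost_del_le (c : Cost α) (hnn : Nonneg c) (i : ℕ) (F : Forest α) :
    editCost c (Edit.del i) F ≤ c (labelAt F i) none := by
  unfold editCost
  split
  · exact hnn _ _
  · exact le_refl _

lemma editCost_rep_le (c : Cost α) (hnn : Nonneg c) (i : ℕ) (y : α) (F : Forest α) :
    editCost c (Edit.rep i y) F ≤ c (labelAt F i) (some y) := by
  unfold editCost
  split
  · exact hnn _ _
  · exact le_refl _

lemma editCost_ins_le (c : Cost α) (hnn : Nonneg c) (i : ℕ) (y : α) (l r : ℕ) (F : Forest α) :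
    editCost c (Edit.ins i y l r) F ≤ c none (some y) := by
  unfold editCost
  split
  · exact hnn _ _
  · exact le_refl _

/-- A script that builds a forest from the empty forest by insertions. -/
def buildScript : Forest α → List (Edit α)
  | [] => []
  | PTree.node b ds :: us => buildScript (ds ++ us) ++ [Edit.ins 0 b 1 (ds.length + 1)]
  termination_by F => sizeL F
  decreasing_by simp only [sizeL_append, sizeL_cons, size_node] <;> omega

lemma buildScript_spec (G : Forest α) : applyScript (buildScript G) [] = G := by
  rcases G with _ | ⟨⟨b, ds⟩, us⟩
  · rw [buildScript]; rfl
  · rw [buildScript, applyScript_append, buildScript_spec (ds ++ us)]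
    show applyIns b 1 (ds.length + 1) 0 (ds ++ us) = _
    rw [applyIns_zero, insRoot_build]
  termination_by sizeL G
  decreasing_by simp only [sizeL_append, sizeL_cons, size_node] <;> omega

lemma exists_script_to_nil (F : Forest α) : ∃ δ : List (Edit α), applyScript δ F = [] := by
  rcases F with _ | ⟨⟨a, cs⟩, ts⟩
  · exact ⟨[], rfl⟩
  · obtain ⟨δ, hδ⟩ := exists_script_to_nil (cs ++ ts)
    refine ⟨Edit.del 1 :: δ, ?_⟩
    rw [applyScript_cons]
    show applyScript δ (applyDel 1 _) = []
    rw [applyDel_one]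
    exact hδ
  termination_by sizeL F
  decreasing_by simp only [sizeL_append, sizeL_cons, size_node] <;> omega

lemma exists_script (F G : Forest α) : ∃ δ : List (Edit α), applyScript δ F = G := by
  obtain ⟨δ₁, h1⟩ := exists_script_to_nil F
  exact ⟨δ₁ ++ buildScript G, by rw [applyScript_append, h1, buildScript_spec]⟩

/-- The set of script costs from `F` to `G`. -/
def costSet (c : Cost α) (F G : Forest α) : Set ℝ :=
  { r : ℝ | ∃ δ : List (Edit α), applyScript δ F = G ∧ scriptCost c δ F = r }

lemma fdist_eq_sInf (c : Cost α) (F G : Forest α) : fdist c F G = sInf (costSet c F G) := rfl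

lemma costSet_nonempty (c : Cost α) (F G : Forest α) : (costSet c F G).Nonempty := by
  obtain ⟨δ, hδ⟩ := exists_script F G
  exact ⟨scriptCost c δ F, δ, hδ, rfl⟩

lemma costSet_bddBelow (c : Cost α) (hnn : Nonneg c) (F G : Forest α) :
    BddBelow (costSet c F G) := by
  refine ⟨0, fun r hr => ?_⟩
  obtain ⟨δ, _, h2⟩ := hr
  rw [← h2]
  exact scriptCost_nonneg c hnn δ F

lemma fdist_nonneg (c : Cost α) (hnn : Nonneg c) (F G : Forest α) : 0 ≤ fdist c F G :=
  le_csInf (costSet_nonempty c F G) (fun r hr => by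
    obtain ⟨δ, _, h2⟩ := hr; rw [← h2]; exact scriptCost_nonneg c hnn δ F)

lemma fdist_le_of_mem (c : Cost α) (hnn : Nonneg c) {F G : Forest α} {r : ℝ}
    (hr : r ∈ costSet c F G) : fdist c F G ≤ r :=
  csInf_le (costSet_bddBelow c hnn F G) hr

lemma fdist_le_step (c : Cost α) (hnn : Nonneg c) (e : Edit α) (F G : Forest α) :
    fdist c F G ≤ editCost c e F + fdist c (e.apply F) G := by
  have h : ∀ r ∈ costSet c (e.apply F) G, fdist c F G ≤ editCost c e F + r := by
    intro r hr
    obtain ⟨δ, h1, h2⟩ := hr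
    refine fdist_le_of_mem c hnn ⟨e :: δ, ?_, ?_⟩
    · rw [applyScript_cons]; exact h1
    · rw [scriptCost_cons, h2]
  have h2 := le_csInf (costSet_nonempty c (e.apply F) G)
    (fun r hr => by linarith [h r hr] : ∀ r ∈ costSet c (e.apply F) G,
      fdist c F G - editCost c e F ≤ r)
  rw [fdist_eq_sInf c (e.apply F) G]
  linarith

lemma fdist_le_step_right (c : Cost α) (hnn : Nonneg c) (e : Edit α) (F G' : Forest α) :
    fdist c F (e.apply G') ≤ fdist c F G' + editCost c e G' := by
  have h : ∀ r ∈ costSet c F G', fdist c F (e.apply G') ≤ r + editCost c e G' := by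
    intro r hr
    obtain ⟨δ, h1, h2⟩ := hr
    refine fdist_le_of_mem c hnn ⟨δ ++ [e], ?_, ?_⟩
    · rw [applyScript_append, h1]; rfl
    · rw [scriptCost_append, h1, h2, scriptCost_cons, scriptCost_nil]; ring
  have h2 := le_csInf (costSet_nonempty c F G')
    (fun r hr => by linarith [h r hr] : ∀ r ∈ costSet c F G',
      fdist c F (e.apply G') - editCost c e G' ≤ r)
  rw [fdist_eq_sInf c F G']
  linarith

lemma fdist_triangle (c : Cost α) (hnn : Nonneg c) (F G H : Forest α) :
    fdist c F H ≤ fdist c F G + fdist c G H := by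
  have key : ∀ r ∈ costSet c F G, ∀ s ∈ costSet c G H, fdist c F H ≤ r + s := by
    intro r hr s hs
    obtain ⟨δ₁, h1, h2⟩ := hr
    obtain ⟨δ₂, h3, h4⟩ := hs
    refine fdist_le_of_mem c hnn ⟨δ₁ ++ δ₂, ?_, ?_⟩
    · rw [applyScript_append, h1, h3]
    · rw [scriptCost_append, h1, h2, h4]
  have step1 : ∀ s ∈ costSet c G H, fdist c F H ≤ fdist c F G + s := by
    intro s hs
    have h2 := le_csInf (costSet_nonempty c F G)
      (fun r hr => by linarith [key r hr s hs] : ∀ r ∈ costSet c F G, fdist c F H - s ≤ r)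
    rw [fdist_eq_sInf c F G]
    linarith
  have h3 := le_csInf (costSet_nonempty c G H)
    (fun s hs => by linarith [step1 s hs] : ∀ s ∈ costSet c G H,
      fdist c F H - fdist c F G ≤ s)
  rw [fdist_eq_sInf c G H]
  linarith

/-! ### `dd` is a lower bound for script costs -/

lemma min3_cases (a1 a2 a3 : ℝ) :
    min a1 (min a2 a3) = a1 ∨ min a1 (min a2 a3) = a2 ∨ min a1 (min a2 a3) = a3 := by
  rcases min_choice a1 (min a2 a3) with h | h
  · exact Or.inl h
  · rcases min_choice a2 a3 with h2 | h2
    · exact Or.inr (Or.inl (h.trans h2))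
    · exact Or.inr (Or.inr (h.trans h2))

lemma dd_opt1 (c : Cost α) (a : α) (cs ts : Forest α) (Y : Forest α) :
    dd c (PTree.node a cs :: ts) Y ≤ c (some a) none + dd c (cs ++ ts) Y := by
  rcases Y with _ | ⟨⟨b, ds⟩, us⟩
  · rw [dd_cons_nil]
  · rw [dd_cons_cons]; exact min_le_left _ _

lemma dd_opt2 (c : Cost α) (b : α) (ds us : Forest α) (X : Forest α) :
    dd c X (PTree.node b ds :: us) ≤ c none (some b) + dd c X (ds ++ us) := by
  rcases X with _ | ⟨⟨a, cs⟩, ts⟩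
  · rw [dd_nil_cons]
  · rw [dd_cons_cons]; exact le_trans (min_le_right _ _) (min_le_left _ _)

lemma dd_opt3 (c : Cost α) (a b : α) (cs ts ds us : Forest α) :
    dd c (PTree.node a cs :: ts) (PTree.node b ds :: us) ≤
      c (some a) (some b) + dd c cs ds + dd c ts us := by
  rw [dd_cons_cons]; exact le_trans (min_le_right _ _) (min_le_right _ _)

lemma dd_del_aux (c : Cost α) : ∀ N : ℕ, ∀ (i : ℕ) (F G : Forest α),
    sizeL F + sizeL G ≤ N → 1 ≤ i → i ≤ sizeL F →
    dd c F G ≤ c (labelAt F i) none + dd c (applyDel i F) G := by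
  intro N
  induction N using Nat.strong_induction_on with
  | _ N ih =>
  intro i F G hN h1 h2
  rcases F with _ | ⟨⟨a, cs⟩, ts⟩
  · simp at h2; omega
  rcases Nat.eq_or_lt_of_le h1 with hi | hi
  · rw [← hi, applyDel_one, labelAt_cons_one]
    exact dd_opt1 c a cs ts G
  · have hlab : labelAt (PTree.node a cs :: ts) i = labelAt (cs ++ ts) (i - 1) :=
      labelAt_cons_of_ge_two a cs ts i (by omega)
    simp only [sizeL_cons, size_node] at h2 hN
    by_cases hc : i ≤ size (PTree.node a cs)
    · have hdel := applyDel_cons_left i a cs ts (by omega) hc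
      have happ : applyDel (i-1) (cs ++ ts) = applyDel (i-1) cs ++ ts :=
        applyDel_append_left cs ts (i-1) (by omega) (by simp only [size_node] at hc; omega)
      rw [hdel]
      simp only [size_node] at hc
      rcases G with _ | ⟨⟨b, ds⟩, us⟩
      · rw [dd_cons_nil, dd_cons_nil, ← happ, hlab]
        have := ih (sizeL (cs ++ ts) + sizeL ([] : Forest α))
          (by (try simp only [sizeL_append, sizeL_cons, size_node, sizeL_nil] at hN ⊢); omega)
          (i-1) (cs ++ ts) [] le_rfl (by omega) (by simp only [sizeL_append]; omega)
        linarith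
      · simp only [sizeL_cons, size_node] at hN
        rw [dd_cons_cons, dd_cons_cons, hlab]
        apply min3_le_add_min3
        · have := ih (sizeL (cs ++ ts) + sizeL (PTree.node b ds :: us))
            (by (try simp only [sizeL_append, sizeL_cons, size_node, sizeL_nil] at hN ⊢); omega)
            (i-1) (cs ++ ts) (PTree.node b ds :: us) le_rfl (by omega)
            (by simp only [sizeL_append]; omega)
          rw [happ] at this
          linarith
        · have := ih (sizeL (PTree.node a cs :: ts) + sizeL (ds ++ us))
            (by (try simp only [sizeL_append, sizeL_cons, size_node, sizeL_nil] at hN ⊢); omega)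
            i (PTree.node a cs :: ts) (ds ++ us) le_rfl h1
            (by simp only [sizeL_cons, size_node]; omega)
          rw [hdel, hlab] at this
          linarith
        · have := ih (sizeL cs + sizeL ds)
            (by (try simp only [sizeL_append, sizeL_cons, size_node, sizeL_nil] at hN ⊢); omega)
            (i-1) cs ds le_rfl (by omega) (by omega)
          have hlab2 : labelAt (cs ++ ts) (i-1) = labelAt cs (i-1) :=
            labelAt_append_left cs ts (i-1) (by omega) (by omega)
          rw [hlab2]
          linarith
    · have hdel := applyDel_cons_right i a cs ts (by omega)
      have hcs : sizeL cs < i - 1 := by simp only [size_node] at hc; omega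
      have happ : applyDel (i-1) (cs ++ ts) = cs ++ applyDel (i - 1 - sizeL cs) ts :=
        applyDel_append_right cs ts (i-1) hcs
      have hidx : i - size (PTree.node a cs) = i - 1 - sizeL cs := by
        simp only [size_node]; omega
      rw [hdel, hidx]
      rcases G with _ | ⟨⟨b, ds⟩, us⟩
      · rw [dd_cons_nil, dd_cons_nil, ← happ, hlab]
        have := ih (sizeL (cs ++ ts) + sizeL ([] : Forest α))
          (by (try simp only [sizeL_append, sizeL_cons, size_node, sizeL_nil] at hN ⊢); omega)
          (i-1) (cs ++ ts) [] le_rfl (by omega) (by simp only [sizeL_append]; omega)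
        linarith
      · simp only [sizeL_cons, size_node] at hN
        rw [dd_cons_cons, dd_cons_cons, hlab]
        apply min3_le_add_min3
        · have := ih (sizeL (cs ++ ts) + sizeL (PTree.node b ds :: us))
            (by (try simp only [sizeL_append, sizeL_cons, size_node, sizeL_nil] at hN ⊢); omega)
            (i-1) (cs ++ ts) (PTree.node b ds :: us) le_rfl (by omega)
            (by simp only [sizeL_append]; omega)
          rw [happ] at this
          linarith
        · have := ih (sizeL (PTree.node a cs :: ts) + sizeL (ds ++ us))
            (by (try simp only [sizeL_append, sizeL_cons, size_node, sizeL_nil] at hN ⊢); omega)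
            i (PTree.node a cs :: ts) (ds ++ us) le_rfl h1
            (by simp only [sizeL_cons, size_node]; omega)
          rw [hdel, hidx, hlab] at this
          linarith
        · have := ih (sizeL ts + sizeL us)
            (by (try simp only [sizeL_append, sizeL_cons, size_node, sizeL_nil] at hN ⊢); omega)
            (i - 1 - sizeL cs) ts us le_rfl (by omega) (by omega)
          have hlab2 : labelAt (cs ++ ts) (i-1) = labelAt ts (i - 1 - sizeL cs) :=
            labelAt_append_right cs ts (i-1) hcs
          rw [hlab2]
          linarith

lemma dd_del (c : Cost α) (i : ℕ) (F G : Forest α) (h1 : 1 ≤ i) (h2 : i ≤ sizeL F) :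
    dd c F G ≤ c (labelAt F i) none + dd c (applyDel i F) G :=
  dd_del_aux c (sizeL F + sizeL G) i F G le_rfl h1 h2

lemma dd_rep_aux (c : Cost α) (htr : Triangle c) (y : α) : ∀ N : ℕ, ∀ (i : ℕ) (F G : Forest α),
    sizeL F + sizeL G ≤ N → 1 ≤ i → i ≤ sizeL F →
    dd c F G ≤ c (labelAt F i) (some y) + dd c (applyRep y i F) G := by
  intro N
  induction N using Nat.strong_induction_on with
  | _ N ih =>
  intro i F G hN h1 h2
  rcases F with _ | ⟨⟨a, cs⟩, ts⟩
  · simp at h2; omega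
  rcases Nat.eq_or_lt_of_le h1 with hi | hi
  · rw [← hi, applyRep_one, labelAt_cons_one]
    rcases G with _ | ⟨⟨b, ds⟩, us⟩
    · rw [dd_cons_nil, dd_cons_nil]
      have := htr (some a) (some y) none
      linarith
    · rw [dd_cons_cons, dd_cons_cons]
      apply min3_le_add_min3
      · have := htr (some a) (some y) none
        linarith
      · have := ih (sizeL (PTree.node a cs :: ts) + sizeL (ds ++ us))
          (by (try simp only [sizeL_append, sizeL_cons, size_node, sizeL_nil] at hN ⊢); omega)
          1 (PTree.node a cs :: ts) (ds ++ us) le_rfl le_rfl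
          (by simp only [sizeL_cons, size_node]; omega)
        rw [applyRep_one, labelAt_cons_one] at this
        linarith
      · have := htr (some a) (some y) (some b)
        linarith
  · have hlab : labelAt (PTree.node a cs :: ts) i = labelAt (cs ++ ts) (i - 1) :=
      labelAt_cons_of_ge_two a cs ts i (by omega)
    simp only [sizeL_cons, size_node] at h2 hN
    by_cases hc : i ≤ size (PTree.node a cs)
    · have hrep := applyRep_cons_left y i a cs ts (by omega) hc
      have happ : applyRep y (i-1) (cs ++ ts) = applyRep y (i-1) cs ++ ts :=
        applyRep_append_left y cs ts (i-1) (by omega) (by simp only [size_node] at hc; omega)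
      rw [hrep]
      simp only [size_node] at hc
      rcases G with _ | ⟨⟨b, ds⟩, us⟩
      · rw [dd_cons_nil, dd_cons_nil, ← happ, hlab]
        have := ih (sizeL (cs ++ ts) + sizeL ([] : Forest α))
          (by (try simp only [sizeL_append, sizeL_cons, size_node, sizeL_nil] at hN ⊢); omega)
          (i-1) (cs ++ ts) [] le_rfl (by omega) (by simp only [sizeL_append]; omega)
        linarith
      · simp only [sizeL_cons, size_node] at hN
        rw [dd_cons_cons, dd_cons_cons, hlab]
        apply min3_le_add_min3
        · have := ih (sizeL (cs ++ ts) + sizeL (PTree.node b ds :: us))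
            (by (try simp only [sizeL_append, sizeL_cons, size_node, sizeL_nil] at hN ⊢); omega)
            (i-1) (cs ++ ts) (PTree.node b ds :: us) le_rfl (by omega)
            (by simp only [sizeL_append]; omega)
          rw [happ] at this
          linarith
        · have := ih (sizeL (PTree.node a cs :: ts) + sizeL (ds ++ us))
            (by (try simp only [sizeL_append, sizeL_cons, size_node, sizeL_nil] at hN ⊢); omega)
            i (PTree.node a cs :: ts) (ds ++ us) le_rfl h1
            (by simp only [sizeL_cons, size_node]; omega)
          rw [hrep, hlab] at this
          linarith
        · have := ih (sizeL cs + sizeL ds)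
            (by (try simp only [sizeL_append, sizeL_cons, size_node, sizeL_nil] at hN ⊢); omega)
            (i-1) cs ds le_rfl (by omega) (by omega)
          have hlab2 : labelAt (cs ++ ts) (i-1) = labelAt cs (i-1) :=
            labelAt_append_left cs ts (i-1) (by omega) (by omega)
          rw [hlab2]
          linarith
    · have hrep := applyRep_cons_right y i a cs ts (by omega)
      have hcs : sizeL cs < i - 1 := by simp only [size_node] at hc; omega
      have happ : applyRep y (i-1) (cs ++ ts) = cs ++ applyRep y (i - 1 - sizeL cs) ts :=
        applyRep_append_right y cs ts (i-1) hcs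
      have hidx : i - size (PTree.node a cs) = i - 1 - sizeL cs := by
        simp only [size_node]; omega
      rw [hrep, hidx]
      rcases G with _ | ⟨⟨b, ds⟩, us⟩
      · rw [dd_cons_nil, dd_cons_nil, ← happ, hlab]
        have := ih (sizeL (cs ++ ts) + sizeL ([] : Forest α))
          (by (try simp only [sizeL_append, sizeL_cons, size_node, sizeL_nil] at hN ⊢); omega)
          (i-1) (cs ++ ts) [] le_rfl (by omega) (by simp only [sizeL_append]; omega)
        linarith
      · simp only [sizeL_cons, size_node] at hN
        rw [dd_cons_cons, dd_cons_cons, hlab]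
        apply min3_le_add_min3
        · have := ih (sizeL (cs ++ ts) + sizeL (PTree.node b ds :: us))
            (by (try simp only [sizeL_append, sizeL_cons, size_node, sizeL_nil] at hN ⊢); omega)
            (i-1) (cs ++ ts) (PTree.node b ds :: us) le_rfl (by omega)
            (by simp only [sizeL_append]; omega)
          rw [happ] at this
          linarith
        · have := ih (sizeL (PTree.node a cs :: ts) + sizeL (ds ++ us))
            (by (try simp only [sizeL_append, sizeL_cons, size_node, sizeL_nil] at hN ⊢); omega)
            i (PTree.node a cs :: ts) (ds ++ us) le_rfl h1
            (by simp only [sizeL_cons, size_node]; omega)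
          rw [hrep, hidx, hlab] at this
          linarith
        · have := ih (sizeL ts + sizeL us)
            (by (try simp only [sizeL_append, sizeL_cons, size_node, sizeL_nil] at hN ⊢); omega)
            (i - 1 - sizeL cs) ts us le_rfl (by omega) (by omega)
          have hlab2 : labelAt (cs ++ ts) (i-1) = labelAt ts (i - 1 - sizeL cs) :=
            labelAt_append_right cs ts (i-1) hcs
          rw [hlab2]
          linarith

lemma dd_rep (c : Cost α) (htr : Triangle c) (y : α) (i : ℕ) (F G : Forest α)
    (h1 : 1 ≤ i) (h2 : i ≤ sizeL F) :
    dd c F G ≤ c (labelAt F i) (some y) + dd c (applyRep y i F) G :=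
  dd_rep_aux c htr y (sizeL F + sizeL G) i F G le_rfl h1 h2

lemma dd_append_aux (c : Cost α) : ∀ N : ℕ, ∀ (A B C D : Forest α),
    sizeL A + sizeL B + sizeL C + sizeL D ≤ N →
    dd c (A ++ B) (C ++ D) ≤ dd c A C + dd c B D := by
  intro N
  induction N using Nat.strong_induction_on with
  | _ N ih =>
  intro A B C D hN
  rcases A with _ | ⟨⟨a, as⟩, ts⟩
  · rcases C with _ | ⟨⟨b, ds⟩, us⟩
    · simp only [List.nil_append, dd_nil_nil]; linarith [le_refl (dd c B D)]
    · simp only [List.nil_append, List.cons_append, dd_nil_cons]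
      have h1 := dd_opt2 c b ds (us ++ D) B
      have h2 := ih (sizeL ([] : Forest α) + sizeL B + sizeL (ds ++ us) + sizeL D)
        (by (try simp only [sizeL_append, sizeL_cons, size_node, sizeL_nil] at hN ⊢); omega)
        [] B (ds ++ us) D le_rfl
      rw [List.nil_append, List.append_assoc] at h2
      linarith
  · rcases C with _ | ⟨⟨b, ds⟩, us⟩
    · simp only [List.nil_append, List.cons_append, dd_cons_nil]
      have h1 := dd_opt1 c a as (ts ++ B) D
      have h2 := ih (sizeL (as ++ ts) + sizeL B + sizeL ([] : Forest α) + sizeL D)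
        (by (try simp only [sizeL_append, sizeL_cons, size_node, sizeL_nil] at hN ⊢); omega)
        (as ++ ts) B [] D le_rfl
      rw [List.nil_append, List.append_assoc] at h2
      linarith
    · simp only [List.cons_append]
      rcases min3_cases (c (some a) none + dd c (as ++ ts) (PTree.node b ds :: us))
        (c none (some b) + dd c (PTree.node a as :: ts) (ds ++ us))
        (c (some a) (some b) + dd c as ds + dd c ts us) with h | h | h <;>
        rw [dd_cons_cons c a b as ts ds us, h]
      · have h1 := dd_opt1 c a as (ts ++ B) (PTree.node b ds :: (us ++ D))
        have h2 := ih (sizeL (as ++ ts) + sizeL B + sizeL (PTree.node b ds :: us) + sizeL D)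
          (by (try simp only [sizeL_append, sizeL_cons, size_node, sizeL_nil] at hN ⊢); omega)
          (as ++ ts) B (PTree.node b ds :: us) D le_rfl
        rw [List.append_assoc] at h2
        rw [show (PTree.node b ds :: us) ++ D = PTree.node b ds :: (us ++ D) from rfl] at h2
        linarith
      · have h1 := dd_opt2 c b ds (us ++ D) (PTree.node a as :: (ts ++ B))
        have h2 := ih (sizeL (PTree.node a as :: ts) + sizeL B + sizeL (ds ++ us) + sizeL D)
          (by (try simp only [sizeL_append, sizeL_cons, size_node, sizeL_nil] at hN ⊢); omega)
          (PTree.node a as :: ts) B (ds ++ us) D le_rfl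
        rw [List.append_assoc] at h2
        rw [show (PTree.node a as :: ts) ++ B = PTree.node a as :: (ts ++ B) from rfl] at h2
        linarith
      · have h1 := dd_opt3 c a b as (ts ++ B) ds (us ++ D)
        have h2 := ih (sizeL ts + sizeL B + sizeL us + sizeL D)
          (by (try simp only [sizeL_append, sizeL_cons, size_node, sizeL_nil] at hN ⊢); omega)
          ts B us D le_rfl
        linarith

lemma dd_append (c : Cost α) (A B C D : Forest α) :
    dd c (A ++ B) (C ++ D) ≤ dd c A C + dd c B D :=
  dd_append_aux c _ A B C D le_rfl

lemma dd_insp_aux (c : Cost α) (hnn : Nonneg c) (htr : Triangle c) :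
    ∀ N : ℕ, ∀ (p : ℕ) (F' G : Forest α),
    sizeL F' + sizeL G ≤ N → 1 ≤ p → p ≤ sizeL F' →
    dd c (applyDel p F') G ≤ c none (labelAt F' p) + dd c F' G := by
  intro N
  induction N using Nat.strong_induction_on with
  | _ N ih =>
  intro p F' G hN h1 h2
  rcases F' with _ | ⟨⟨a, cs⟩, ts⟩
  · simp at h2; omega
  rcases Nat.eq_or_lt_of_le h1 with hp | hp
  · rw [← hp, applyDel_one, labelAt_cons_one]
    rcases G with _ | ⟨⟨b, ds⟩, us⟩
    · rw [dd_cons_nil]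
      have := hnn none (some a)
      have := hnn (some a) none
      linarith
    · rcases min3_cases (c (some a) none + dd c (cs ++ ts) (PTree.node b ds :: us))
        (c none (some b) + dd c (PTree.node a cs :: ts) (ds ++ us))
        (c (some a) (some b) + dd c cs ds + dd c ts us) with h | h | h <;>
        rw [dd_cons_cons c a b cs ts ds us, h]
      · have := hnn none (some a)
        have := hnn (some a) none
        linarith
      · have h3 := dd_opt2 c b ds us (cs ++ ts)
        have h4 := ih (sizeL (PTree.node a cs :: ts) + sizeL (ds ++ us))
          (by (try simp only [sizeL_append, sizeL_cons, size_node, sizeL_nil] at hN ⊢); omega)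
          1 (PTree.node a cs :: ts) (ds ++ us) le_rfl le_rfl
          (by simp only [sizeL_cons, size_node]; omega)
        rw [applyDel_one, labelAt_cons_one] at h4
        linarith
      · have h3 := dd_opt2 c b ds us (cs ++ ts)
        have h4 := dd_append c cs ts ds us
        have h5 := htr none (some a) (some b)
        linarith
  · have hlab : labelAt (PTree.node a cs :: ts) p = labelAt (cs ++ ts) (p - 1) :=
      labelAt_cons_of_ge_two a cs ts p (by omega)
    simp only [sizeL_cons, size_node] at h2 hN
    by_cases hc : p ≤ size (PTree.node a cs)
    · have hdel := applyDel_cons_left p a cs ts (by omega) hc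
      have happ : applyDel (p-1) (cs ++ ts) = applyDel (p-1) cs ++ ts :=
        applyDel_append_left cs ts (p-1) (by omega) (by simp only [size_node] at hc; omega)
      rw [hdel]
      simp only [size_node] at hc
      rcases G with _ | ⟨⟨b, ds⟩, us⟩
      · rw [dd_cons_nil, dd_cons_nil, hlab]
        have := ih (sizeL (cs ++ ts) + sizeL ([] : Forest α))
          (by (try simp only [sizeL_append, sizeL_cons, size_node, sizeL_nil] at hN ⊢); omega)
          (p-1) (cs ++ ts) [] le_rfl (by omega) (by simp only [sizeL_append]; omega)
        rw [happ] at this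
        linarith
      · simp only [sizeL_cons, size_node] at hN
        rw [dd_cons_cons, dd_cons_cons, hlab]
        apply min3_le_add_min3
        · have := ih (sizeL (cs ++ ts) + sizeL (PTree.node b ds :: us))
            (by (try simp only [sizeL_append, sizeL_cons, size_node, sizeL_nil] at hN ⊢); omega)
            (p-1) (cs ++ ts) (PTree.node b ds :: us) le_rfl (by omega)
            (by simp only [sizeL_append]; omega)
          rw [happ] at this
          linarith
        · have := ih (sizeL (PTree.node a cs :: ts) + sizeL (ds ++ us))
            (by (try simp only [sizeL_append, sizeL_cons, size_node, sizeL_nil] at hN ⊢); omega)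
            p (PTree.node a cs :: ts) (ds ++ us) le_rfl h1
            (by simp only [sizeL_cons, size_node]; omega)
          rw [hdel, hlab] at this
          linarith
        · have := ih (sizeL cs + sizeL ds)
            (by (try simp only [sizeL_append, sizeL_cons, size_node, sizeL_nil] at hN ⊢); omega)
            (p-1) cs ds le_rfl (by omega) (by omega)
          have hlab2 : labelAt (cs ++ ts) (p-1) = labelAt cs (p-1) :=
            labelAt_append_left cs ts (p-1) (by omega) (by omega)
          rw [hlab2]
          linarith
    · have hdel := applyDel_cons_right p a cs ts (by omega)
      have hcs : sizeL cs < p - 1 := by simp only [size_node] at hc; omega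
      have happ : applyDel (p-1) (cs ++ ts) = cs ++ applyDel (p - 1 - sizeL cs) ts :=
        applyDel_append_right cs ts (p-1) hcs
      have hidx : p - size (PTree.node a cs) = p - 1 - sizeL cs := by
        simp only [size_node]; omega
      rw [hdel, hidx]
      rcases G with _ | ⟨⟨b, ds⟩, us⟩
      · rw [dd_cons_nil, dd_cons_nil, hlab]
        have := ih (sizeL (cs ++ ts) + sizeL ([] : Forest α))
          (by (try simp only [sizeL_append, sizeL_cons, size_node, sizeL_nil] at hN ⊢); omega)
          (p-1) (cs ++ ts) [] le_rfl (by omega) (by simp only [sizeL_append]; omega)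
        rw [happ] at this
        linarith
      · simp only [sizeL_cons, size_node] at hN
        rw [dd_cons_cons, dd_cons_cons, hlab]
        apply min3_le_add_min3
        · have := ih (sizeL (cs ++ ts) + sizeL (PTree.node b ds :: us))
            (by (try simp only [sizeL_append, sizeL_cons, size_node, sizeL_nil] at hN ⊢); omega)
            (p-1) (cs ++ ts) (PTree.node b ds :: us) le_rfl (by omega)
            (by simp only [sizeL_append]; omega)
          rw [happ] at this
          linarith
        · have := ih (sizeL (PTree.node a cs :: ts) + sizeL (ds ++ us))
            (by (try simp only [sizeL_append, sizeL_cons, size_node, sizeL_nil] at hN ⊢); omega)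
            p (PTree.node a cs :: ts) (ds ++ us) le_rfl h1
            (by simp only [sizeL_cons, size_node]; omega)
          rw [hdel, hidx, hlab] at this
          linarith
        · have := ih (sizeL ts + sizeL us)
            (by (try simp only [sizeL_append, sizeL_cons, size_node, sizeL_nil] at hN ⊢); omega)
            (p - 1 - sizeL cs) ts us le_rfl (by omega) (by omega)
          have hlab2 : labelAt (cs ++ ts) (p-1) = labelAt ts (p - 1 - sizeL cs) :=
            labelAt_append_right cs ts (p-1) hcs
          rw [hlab2]
          linarith

lemma dd_insp (c : Cost α) (hnn : Nonneg c) (htr : Triangle c) (p : ℕ) (F' G : Forest α)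
    (h1 : 1 ≤ p) (h2 : p ≤ sizeL F') :
    dd c (applyDel p F') G ≤ c none (labelAt F' p) + dd c F' G :=
  dd_insp_aux c hnn htr _ p F' G le_rfl h1 h2

lemma dd_edit (c : Cost α) (hnn : Nonneg c) (htr : Triangle c) (e : Edit α) (F G : Forest α) :
    dd c F G ≤ editCost c e F + dd c (e.apply F) G := by
  by_cases h : e.apply F = F
  · rw [h]
    unfold editCost
    rw [if_pos h]
    simp
  · unfold editCost
    rw [if_neg h]
    rcases e with i | ⟨i, y⟩ | ⟨i, y, l, r⟩
    · have hr : 1 ≤ i ∧ i ≤ sizeL F := by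
        by_contra hr
        exact h (applyDel_not_in_range F i hr)
      exact dd_del c i F G hr.1 hr.2
    · have hr : 1 ≤ i ∧ i ≤ sizeL F := by
        by_contra hr
        exact h (applyRep_not_in_range y F i hr)
      exact dd_rep c htr y i F G hr.1 hr.2
    · rcases applyIns_inverse y l r i F with heq | ⟨p, hp1, hp2, hdelp, hlabp⟩
      · exact absurd heq h
      · have := dd_insp c hnn htr p (applyIns y l r i F) G hp1 hp2
        rw [hdelp, hlabp] at this
        exact this

lemma dd_le_script (c : Cost α) (hnn : Nonneg c) (hse : SelfEq c) (htr : Triangle c)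
    (δ : List (Edit α)) (F G : Forest α) (hδ : applyScript δ F = G) :
    dd c F G ≤ scriptCost c δ F := by
  induction δ generalizing F with
  | nil =>
    rw [applyScript_nil] at hδ
    rw [hδ, scriptCost_nil, dd_self c hnn hse]
  | cons e δ ihd =>
    rw [applyScript_cons] at hδ
    rw [scriptCost_cons]
    have h1 := dd_edit c hnn htr e F G
    have h2 := ihd (e.apply F) hδ
    linarith

lemma dd_le_fdist (c : Cost α) (hnn : Nonneg c) (hse : SelfEq c) (htr : Triangle c)
    (F G : Forest α) : dd c F G ≤ fdist c F G :=
  le_csInf (costSet_nonempty c F G) (fun r hr => by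
    obtain ⟨δ, h1, h2⟩ := hr
    rw [← h2]
    exact dd_le_script c hnn hse htr δ F G h1)

/-! ### Lifting scripts into contexts; `fdist ≤ dd` -/

@[simp] lemma Edit_apply_del (i : ℕ) (F : Forest α) :
    (Edit.del i).apply F = applyDel i F := rfl
@[simp] lemma Edit_apply_rep (i : ℕ) (y : α) (F : Forest α) :
    (Edit.rep i y).apply F = applyRep y i F := rfl
@[simp] lemma Edit_apply_ins (i : ℕ) (y : α) (l r : ℕ) (F : Forest α) :
    (Edit.ins i y l r).apply F = applyIns y l r i F := rfl

lemma editCost_of_eq (c : Cost α) (e : Edit α) (F : Forest α) (h : e.apply F = F) :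
    editCost c e F = 0 := by
  unfold editCost
  rw [if_pos h]

lemma editCost_del_of_ne (c : Cost α) (i : ℕ) (F : Forest α)
    (h : (Edit.del i).apply F ≠ F) :
    editCost c (Edit.del i) F = c (labelAt F i) none := by
  unfold editCost
  rw [if_neg h]

lemma editCost_rep_of_ne (c : Cost α) (i : ℕ) (y : α) (F : Forest α)
    (h : (Edit.rep i y).apply F ≠ F) :
    editCost c (Edit.rep i y) F = c (labelAt F i) (some y) := by
  unfold editCost
  rw [if_neg h]

lemma editCost_ins_of_ne (c : Cost α) (i : ℕ) (y : α) (l r : ℕ) (F : Forest α)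
    (h : (Edit.ins i y l r).apply F ≠ F) :
    editCost c (Edit.ins i y l r) F = c none (some y) := by
  unfold editCost
  rw [if_neg h]

/-- A script is effective along `F` if every edit changes the forest it is applied to. -/
def Effective : List (Edit α) → Forest α → Prop
  | [], _ => True
  | e :: δ, F => e.apply F ≠ F ∧ Effective δ (e.apply F)

lemma normalize (c : Cost α) (δ : List (Edit α)) (F : Forest α) :
    ∃ δ' : List (Edit α), applyScript δ' F = applyScript δ F ∧
      scriptCost c δ' F = scriptCost c δ F ∧ Effective δ' F := by
  induction δ generalizing F with
  | nil => exact ⟨[], rfl, rfl, trivial⟩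
  | cons e δ ihd =>
    by_cases h : e.apply F = F
    · obtain ⟨δ', h1, h2, h3⟩ := ihd F
      refine ⟨δ', ?_, ?_, h3⟩
      · rw [h1, applyScript_cons, h]
      · rw [h2, scriptCost_cons, h, editCost_of_eq c e F h]
        ring
    · obtain ⟨δ', h1, h2, h3⟩ := ihd (e.apply F)
      refine ⟨e :: δ', ?_, ?_, h, h3⟩
      · rw [applyScript_cons, h1, applyScript_cons]
      · rw [scriptCost_cons, scriptCost_cons, h2]

/-- Lift an edit on the children forest of the first tree. -/
def liftC : Edit α → Edit α
  | .del i => .del (i + 1)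
  | .rep i y => .rep (i + 1) y
  | .ins i y l r => .ins (i + 1) y l r

/-- Lift an edit on a forest to the forest with one more tree in front,
where `s` is the size of the new first tree. -/
def liftR (s : ℕ) : Edit α → Edit α
  | .del i => .del (i + s)
  | .rep i y => .rep (i + s) y
  | .ins m y l r => if m = 0 then .ins 0 y (l + 1) (r + 1) else .ins (m + s) y l r

lemma liftC_spec (c : Cost α) (e : Edit α) (a : α) (X ts : Forest α) (h : e.apply X ≠ X) :
    (liftC e).apply (PTree.node a X :: ts) = PTree.node a (e.apply X) :: ts ∧
      editCost c (liftC e) (PTree.node a X :: ts) = editCost c e X := by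
  have hcons : ∀ Z : Forest α, (PTree.node a Z :: ts = PTree.node a X :: ts) ↔ Z = X := by
    intro Z
    constructor
    · intro hz
      injection hz with hz1 _
      injection hz1
    · intro hz; rw [hz]
  rcases e with i | ⟨i, y⟩ | ⟨i, y, l, r⟩
  · simp only [Edit_apply_del] at h
    have hr : 1 ≤ i ∧ i ≤ sizeL X := by
      by_contra hr
      exact h (applyDel_not_in_range X i hr)
    have happ : applyDel (i+1) (PTree.node a X :: ts) = PTree.node a (applyDel i X) :: ts := by
      rw [applyDel_cons_left (i+1) a X ts (by omega) (by simp only [size_node]; omega)]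
      simp
    refine ⟨by simp [liftC, happ], ?_⟩
    rw [show liftC (Edit.del i) = Edit.del (i+1) from rfl]
    rw [editCost_del_of_ne c (i+1) _ (by simp only [Edit_apply_del, happ, ne_eq, hcons]; exact h),
      editCost_del_of_ne c i X h]
    rw [labelAt_cons_of_ge_two a X ts (i+1) (by omega)]
    simp only [Nat.add_sub_cancel]
    rw [labelAt_append_left X ts i hr.1 hr.2]
  · simp only [Edit_apply_rep] at h
    have hr : 1 ≤ i ∧ i ≤ sizeL X := by
      by_contra hr
      exact h (applyRep_not_in_range y X i hr)
    have happ : applyRep y (i+1) (PTree.node a X :: ts) = PTree.node a (applyRep y i X) :: ts := by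
      rw [applyRep_cons_left y (i+1) a X ts (by omega) (by simp only [size_node]; omega)]
      simp
    refine ⟨by simp [liftC, happ], ?_⟩
    rw [show liftC (Edit.rep i y) = Edit.rep (i+1) y from rfl]
    rw [editCost_rep_of_ne c (i+1) y _ (by simp only [Edit_apply_rep, happ, ne_eq, hcons]; exact h),
      editCost_rep_of_ne c i y X h]
    rw [labelAt_cons_of_ge_two a X ts (i+1) (by omega)]
    simp only [Nat.add_sub_cancel]
    rw [labelAt_append_left X ts i hr.1 hr.2]
  · simp only [Edit_apply_ins] at h
    have hr : i ≤ sizeL X := by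
      by_contra hr
      exact h (applyIns_oob y l r X i (by omega) (by omega))
    have happ : applyIns y l r (i+1) (PTree.node a X :: ts)
        = PTree.node a (applyIns y l r i X) :: ts := by
      rw [applyIns_cons_left y l r i a X ts (by simp only [size_node]; omega)]
    refine ⟨by simp [liftC, happ], ?_⟩
    rw [show liftC (Edit.ins i y l r) = Edit.ins (i+1) y l r from rfl]
    rw [editCost_ins_of_ne c (i+1) y l r _
        (by simp only [Edit_apply_ins, happ, ne_eq, hcons]; exact h),
      editCost_ins_of_ne c i y l r X h]

lemma insRoot_cons (y : α) (l r : ℕ) (t : PTree α) (ts : Forest α)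
    (hg : ¬(r > ts.length + 1 ∨ l > r ∨ l < 1)) :
    insRoot y (l+1) (r+1) (t :: ts) = t :: insRoot y l r ts := by
  push_neg at hg
  obtain ⟨hr, hlr, hl⟩ := hg
  have hg1 : ¬((r+1) > (t :: ts).length + 1 ∨ (l+1) > (r+1) ∨ (l+1) < 1) := by
    push_neg
    refine ⟨by simp only [List.length_cons]; omega, by omega, by omega⟩
  have hg0 : ¬(r > ts.length + 1 ∨ l > r ∨ l < 1) := by
    push_neg
    exact ⟨hr, hlr, hl⟩
  have h1 : l + 1 - 1 = (l - 1) + 1 := by omega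
  unfold insRoot
  rw [if_neg hg1, if_neg hg0]
  by_cases he : l = r
  · rw [if_pos (by omega), if_pos he, h1, List.take_succ_cons, List.drop_succ_cons]
    simp
  · have h2 : r + 1 - 1 = (r - 1) + 1 := by omega
    have h3 : r + 1 - (l + 1) = r - l := by omega
    rw [if_neg (by omega), if_neg he, h1, h2, h3, List.take_succ_cons, List.drop_succ_cons,
      List.drop_succ_cons]
    simp

lemma liftR_spec (c : Cost α) (e : Edit α) (t : PTree α) (X : Forest α) (h : e.apply X ≠ X) :
    (liftR (size t) e).apply (t :: X) = t :: e.apply X ∧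
      editCost c (liftR (size t) e) (t :: X) = editCost c e X := by
  obtain ⟨a, cs⟩ := t
  have hs : 1 ≤ size (PTree.node a cs) := size_pos _
  have hcons : ∀ Z : Forest α, (PTree.node a cs :: Z = PTree.node a cs :: X) ↔ Z = X := by
    intro Z
    constructor
    · intro hz; injection hz
    · intro hz; rw [hz]
  set s := size (PTree.node a cs) with hsdef
  have hlab : ∀ i, 1 ≤ i → i ≤ sizeL X →
      labelAt (PTree.node a cs :: X) (i + s) = labelAt X i := by
    intro i hi1 hi2
    rw [labelAt_cons_of_ge_two a cs X (i + s) (by omega)]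
    rw [labelAt_append_right cs X (i + s - 1) (by simp only [hsdef, size_node] at *; omega)]
    congr 1
    simp only [hsdef, size_node] at *
    omega
  rcases e with i | ⟨i, y⟩ | ⟨i, y, l, r⟩
  · simp only [Edit_apply_del] at h
    have hr : 1 ≤ i ∧ i ≤ sizeL X := by
      by_contra hr
      exact h (applyDel_not_in_range X i hr)
    have happ : applyDel (i+s) (PTree.node a cs :: X) = PTree.node a cs :: applyDel i X := by
      rw [applyDel_cons_right (i+s) a cs X (by omega)]
      congr 1
      congr 1
      omega
    refine ⟨by simp [liftR, happ], ?_⟩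
    rw [show liftR s (Edit.del i) = Edit.del (i+s) from rfl]
    rw [editCost_del_of_ne c (i+s) _ (by simp only [Edit_apply_del, happ, ne_eq, hcons]; exact h),
      editCost_del_of_ne c i X h, hlab i hr.1 hr.2]
  · simp only [Edit_apply_rep] at h
    have hr : 1 ≤ i ∧ i ≤ sizeL X := by
      by_contra hr
      exact h (applyRep_not_in_range y X i hr)
    have happ : applyRep y (i+s) (PTree.node a cs :: X) = PTree.node a cs :: applyRep y i X := by
      rw [applyRep_cons_right y (i+s) a cs X (by omega)]
      congr 2
      omega
    refine ⟨by simp [liftR, happ], ?_⟩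
    rw [show liftR s (Edit.rep i y) = Edit.rep (i+s) y from rfl]
    rw [editCost_rep_of_ne c (i+s) y _ (by simp only [Edit_apply_rep, happ, ne_eq, hcons]; exact h),
      editCost_rep_of_ne c i y X h, hlab i hr.1 hr.2]
  · simp only [Edit_apply_ins] at h
    rcases Nat.eq_zero_or_pos i with hi | hi
    · subst hi
      rw [applyIns_zero] at h
      have hg : ¬(r > X.length + 1 ∨ l > r ∨ l < 1) := by
        intro hg
        apply h
        unfold insRoot
        rw [if_pos hg]
      have happ : applyIns y (l+1) (r+1) 0 (PTree.node a cs :: X)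
          = PTree.node a cs :: insRoot y l r X := by
        rw [applyIns_zero, insRoot_cons y l r _ X hg]
      have hlift : liftR s (Edit.ins 0 y l r) = Edit.ins 0 y (l+1) (r+1) := by
        simp [liftR]
      refine ⟨?_, ?_⟩
      · rw [hlift]
        simp only [Edit_apply_ins, applyIns_zero] at happ ⊢
        rw [happ]
      · rw [hlift]
        rw [editCost_ins_of_ne c 0 y (l+1) (r+1) _
            (by simp only [Edit_apply_ins, happ, ne_eq, hcons, applyIns_zero]; exact h),
          editCost_ins_of_ne c 0 y l r X (by simpa [applyIns_zero] using h)]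
    · have hr : i ≤ sizeL X := by
        by_contra hr
        exact h (applyIns_oob y l r X i (by omega) (by omega))
      have hine : i + s ≠ 0 := by omega
      obtain ⟨m, hm⟩ : ∃ m, i + s = m + 1 := ⟨i + s - 1, by omega⟩
      have happ : applyIns y l r (i+s) (PTree.node a cs :: X)
          = PTree.node a cs :: applyIns y l r i X := by
        rw [hm, applyIns_cons_right y l r m a cs X (by omega)]
        congr 1
        congr 1
        omega
      have hlift : liftR s (Edit.ins i y l r) = Edit.ins (i+s) y l r := by
        simp [liftR, Nat.pos_iff_ne_zero.mp hi]
      refine ⟨by simp [hlift, happ], ?_⟩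
      rw [hlift]
      rw [editCost_ins_of_ne c (i+s) y l r _
          (by simp only [Edit_apply_ins, happ, ne_eq, hcons]; exact h),
        editCost_ins_of_ne c i y l r X h]

lemma liftC_script (c : Cost α) (δ : List (Edit α)) (a : α) (X ts : Forest α)
    (hEff : Effective δ X) :
    applyScript (δ.map liftC) (PTree.node a X :: ts) = PTree.node a (applyScript δ X) :: ts ∧
      scriptCost c (δ.map liftC) (PTree.node a X :: ts) = scriptCost c δ X := by
  induction δ generalizing X with
  | nil => exact ⟨rfl, rfl⟩
  | cons e δ ihd =>
    obtain ⟨h1, h2⟩ := hEff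
    obtain ⟨g1, g2⟩ := liftC_spec c e a X ts h1
    obtain ⟨k1, k2⟩ := ihd (e.apply X) h2
    constructor
    · rw [List.map_cons, applyScript_cons, g1, k1, applyScript_cons]
    · rw [List.map_cons, scriptCost_cons, scriptCost_cons, g1, g2, k2]

lemma liftR_script (c : Cost α) (δ : List (Edit α)) (t : PTree α) (X : Forest α)
    (hEff : Effective δ X) :
    applyScript (δ.map (liftR (size t))) (t :: X) = t :: applyScript δ X ∧
      scriptCost c (δ.map (liftR (size t))) (t :: X) = scriptCost c δ X := by
  induction δ generalizing X with
  | nil => exact ⟨rfl, rfl⟩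
  | cons e δ ihd =>
    obtain ⟨h1, h2⟩ := hEff
    obtain ⟨g1, g2⟩ := liftR_spec c e t X h1
    obtain ⟨k1, k2⟩ := ihd (e.apply X) h2
    constructor
    · rw [List.map_cons, applyScript_cons, g1, k1, applyScript_cons]
    · rw [List.map_cons, scriptCost_cons, scriptCost_cons, g1, g2, k2]

lemma fdist_lift_child (c : Cost α) (hnn : Nonneg c) (a : α) (X Y ts : Forest α) :
    fdist c (PTree.node a X :: ts) (PTree.node a Y :: ts) ≤ fdist c X Y := by
  apply le_csInf (costSet_nonempty c X Y)
  intro r hr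
  obtain ⟨δ, h1, h2⟩ := hr
  obtain ⟨δ', e1, e2, e3⟩ := normalize c δ X
  obtain ⟨k1, k2⟩ := liftC_script c δ' a X ts e3
  exact fdist_le_of_mem c hnn ⟨δ'.map liftC, by rw [k1, e1, h1], by rw [k2, e2, h2]⟩

lemma fdist_lift_suffix (c : Cost α) (hnn : Nonneg c) (t : PTree α) (X Y : Forest α) :
    fdist c (t :: X) (t :: Y) ≤ fdist c X Y := by
  apply le_csInf (costSet_nonempty c X Y)
  intro r hr
  obtain ⟨δ, h1, h2⟩ := hr
  obtain ⟨δ', e1, e2, e3⟩ := normalize c δ X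
  obtain ⟨k1, k2⟩ := liftR_script c δ' t X e3
  exact fdist_le_of_mem c hnn ⟨δ'.map (liftR (size t)), by rw [k1, e1, h1], by rw [k2, e2, h2]⟩

lemma fdist_rep_head (c : Cost α) (hnn : Nonneg c) (a b : α) (ds ts : Forest α) :
    fdist c (PTree.node a ds :: ts) (PTree.node b ds :: ts) ≤ c (some a) (some b) := by
  have happ : (Edit.rep 1 b).apply (PTree.node a ds :: ts) = PTree.node b ds :: ts := by
    simp only [Edit_apply_rep]
    exact applyRep_one b a ds ts
  have hm : editCost c (Edit.rep 1 b) (PTree.node a ds :: ts)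
      ∈ costSet c (PTree.node a ds :: ts) (PTree.node b ds :: ts) :=
    ⟨[Edit.rep 1 b], by rw [applyScript_cons, applyScript_nil, happ],
      by rw [scriptCost_cons, scriptCost_nil]; ring⟩
  refine le_trans (fdist_le_of_mem c hnn hm) ?_
  refine le_trans (editCost_rep_le c hnn 1 b _) ?_
  rw [labelAt_cons_one]

lemma fdist_D1 (c : Cost α) (hnn : Nonneg c) (a : α) (cs ts G : Forest α) :
    fdist c (PTree.node a cs :: ts) G ≤ c (some a) none + fdist c (cs ++ ts) G := by
  have h := fdist_le_step c hnn (Edit.del 1) (PTree.node a cs :: ts) G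
  rw [show (Edit.del 1).apply (PTree.node a cs :: ts) = cs ++ ts by
    simp only [Edit_apply_del]; exact applyDel_one a cs ts] at h
  have h2 := editCost_del_le c hnn 1 (PTree.node a cs :: ts)
  rw [labelAt_cons_one] at h2
  linarith

lemma fdist_D2 (c : Cost α) (hnn : Nonneg c) (b : α) (ds us F : Forest α) :
    fdist c F (PTree.node b ds :: us) ≤ c none (some b) + fdist c F (ds ++ us) := by
  have h := fdist_le_step_right c hnn (Edit.ins 0 b 1 (ds.length + 1)) F (ds ++ us)
  rw [show (Edit.ins 0 b 1 (ds.length + 1)).apply (ds ++ us) = PTree.node b ds :: us by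
    simp only [Edit_apply_ins]; rw [applyIns_zero, insRoot_build]] at h
  have h2 := editCost_ins_le c hnn 0 b 1 (ds.length + 1) (ds ++ us)
  linarith

lemma fdist_D3 (c : Cost α) (hnn : Nonneg c) (a b : α) (cs ts ds us : Forest α) :
    fdist c (PTree.node a cs :: ts) (PTree.node b ds :: us) ≤
      c (some a) (some b) + fdist c cs ds + fdist c ts us := by
  have t1 := fdist_triangle c hnn (PTree.node a cs :: ts) (PTree.node a ds :: ts)
    (PTree.node b ds :: us)
  have t2 := fdist_triangle c hnn (PTree.node a ds :: ts) (PTree.node b ds :: ts)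
    (PTree.node b ds :: us)
  have l1 := fdist_lift_child c hnn a cs ds ts
  have l2 := fdist_rep_head c hnn a b ds ts
  have l3 := fdist_lift_suffix c hnn (PTree.node b ds) ts us
  linarith

lemma fdist_le_dd_aux (c : Cost α) (hnn : Nonneg c) : ∀ N : ℕ, ∀ (F G : Forest α),
    sizeL F + sizeL G ≤ N → fdist c F G ≤ dd c F G := by
  intro N
  induction N using Nat.strong_induction_on with
  | _ N ih =>
  intro F G hN
  rcases F with _ | ⟨⟨a, cs⟩, ts⟩ <;> rcases G with _ | ⟨⟨b, ds⟩, us⟩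
  · rw [dd_nil_nil]
    exact fdist_le_of_mem c hnn ⟨[], rfl, rfl⟩
  · rw [dd_nil_cons]
    have h1 := fdist_D2 c hnn b ds us ([] : Forest α)
    have h2 := ih (sizeL ([] : Forest α) + sizeL (ds ++ us))
      (by (try simp only [sizeL_append, sizeL_cons, size_node, sizeL_nil] at hN ⊢); omega)
      [] (ds ++ us) le_rfl
    linarith
  · rw [dd_cons_nil]
    have h1 := fdist_D1 c hnn a cs ts ([] : Forest α)
    have h2 := ih (sizeL (cs ++ ts) + sizeL ([] : Forest α))
      (by (try simp only [sizeL_append, sizeL_cons, size_node, sizeL_nil] at hN ⊢); omega)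
      (cs ++ ts) [] le_rfl
    linarith
  · rw [dd_cons_cons]
    apply le_min
    · have h1 := fdist_D1 c hnn a cs ts (PTree.node b ds :: us)
      have h2 := ih (sizeL (cs ++ ts) + sizeL (PTree.node b ds :: us))
        (by (try simp only [sizeL_append, sizeL_cons, size_node, sizeL_nil] at hN ⊢); omega)
        (cs ++ ts) (PTree.node b ds :: us) le_rfl
      linarith
    apply le_min
    · have h1 := fdist_D2 c hnn b ds us (PTree.node a cs :: ts)
      have h2 := ih (sizeL (PTree.node a cs :: ts) + sizeL (ds ++ us))
        (by (try simp only [sizeL_append, sizeL_cons, size_node, sizeL_nil] at hN ⊢); omega)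
        (PTree.node a cs :: ts) (ds ++ us) le_rfl
      linarith
    · have h1 := fdist_D3 c hnn a b cs ts ds us
      have h2 := ih (sizeL cs + sizeL ds)
        (by (try simp only [sizeL_append, sizeL_cons, size_node, sizeL_nil] at hN ⊢); omega)
        cs ds le_rfl
      have h3 := ih (sizeL ts + sizeL us)
        (by (try simp only [sizeL_append, sizeL_cons, size_node, sizeL_nil] at hN ⊢); omega)
        ts us le_rfl
      linarith

lemma fdist_eq_dd (c : Cost α) (hnn : Nonneg c) (hse : SelfEq c) (htr : Triangle c)
    (F G : Forest α) : fdist c F G = dd c F G :=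
  le_antisymm (fdist_le_dd_aux c hnn (sizeL F + sizeL G) F G le_rfl)
    (dd_le_fdist c hnn hse htr F G)

/-! ### Rightmost leaves and subforests -/

lemma rlGo_nil (acc : ℕ) : rlGo acc ([] : Forest α) = acc := rfl
lemma rlGo_single (acc : ℕ) (t : PTree α) : rlGo acc [t] = acc + rlIdx t := rfl
lemma rlGo_cons2 (acc : ℕ) (t t2 : PTree α) (ts : Forest α) :
    rlGo acc (t :: t2 :: ts) = rlGo (acc + size t) (t2 :: ts) := rfl
lemma rlIdx_node (a : α) (cs : Forest α) : rlIdx (PTree.node a cs) = rlGo 1 cs := rfl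

lemma rlGo_eq_aux : ∀ N : ℕ, ∀ (L : Forest α) (acc : ℕ), sizeL L ≤ N →
    rlGo acc L = acc + sizeL L := by
  intro N
  induction N using Nat.strong_induction_on with
  | _ N ih =>
  intro L acc hN
  rcases L with _ | ⟨t, ts⟩
  · rw [rlGo_nil]; simp
  rcases ts with _ | ⟨t2, ts2⟩
  · obtain ⟨a, cs⟩ := t
    rw [rlGo_single, rlIdx_node]
    rw [ih (sizeL cs) (by simp only [sizeL_cons, size_node, sizeL_nil] at hN; omega) cs 1 le_rfl]
    simp only [sizeL_cons, size_node, sizeL_nil]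
    omega
  · rw [rlGo_cons2]
    have hs : 1 ≤ size t := size_pos t
    rw [ih (sizeL (t2 :: ts2)) (by simp only [sizeL_cons] at hN ⊢; omega) (t2 :: ts2)
      (acc + size t) le_rfl]
    simp only [sizeL_cons]
    omega

lemma rlIdx_eq (t : PTree α) : rlIdx t = size t := by
  obtain ⟨a, cs⟩ := t
  rw [rlIdx_node, rlGo_eq_aux (sizeL cs) cs 1 le_rfl]
  simp only [size_node]
  try omega

lemma rlAt_eq (F : Forest α) (i : ℕ) (t : PTree α) (h : treeAt F i = some t) :
    rlAt F i = i + size t - 1 := by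
  unfold rlAt
  rw [h]
  show i + rlIdx t - 1 = i + size t - 1
  rw [rlIdx_eq]

/-! #### Nesting of subtrees in pre-order -/

lemma nest_aux : ∀ N : ℕ, ∀ (L : Forest α) (m : ℕ) (s : PTree α), sizeL L ≤ N →
    (subtreesL L)[m]? = some s → m + size s ≤ sizeL L := by
  intro N
  induction N using Nat.strong_induction_on with
  | _ N ih =>
  intro L m s hN hm
  rcases L with _ | ⟨⟨a, cs⟩, ts⟩
  · simp [subtreesL_nil] at hm
  rcases Nat.eq_zero_or_pos m with h0 | h0
  · subst h0
    simp only [subtreesL_cons, subtreesT_node, List.cons_append, List.getElem?_cons_zero,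
      Option.some_inj] at hm
    rw [← hm]
    simp only [sizeL_cons, size_node]
    omega
  · obtain ⟨m', rfl⟩ : ∃ m', m = m' + 1 := ⟨m - 1, by omega⟩
    simp only [subtreesL_cons, subtreesT_node, List.cons_append,
      List.getElem?_cons_succ] at hm
    by_cases hcs : m' < (subtreesL cs).length
    · rw [List.getElem?_append_left hcs] at hm
      have := ih (sizeL cs) (by simp only [sizeL_cons, size_node] at hN; omega) cs m' s le_rfl hm
      simp only [sizeL_cons, size_node]
      omega
    · rw [List.getElem?_append_right (by omega)] at hm
      have := ih (sizeL ts) (by simp only [sizeL_cons, size_node] at hN; omega)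
        ts (m' - (subtreesL cs).length) s le_rfl hm
      rw [length_subtreesL] at hcs this
      simp only [sizeL_cons, size_node]
      omega

lemma slice_aux : ∀ N : ℕ, ∀ (L : Forest α) (m : ℕ) (s : PTree α), sizeL L ≤ N →
    (subtreesL L)[m]? = some s → ∀ d, d < size s →
    (subtreesL L)[m + d]? = (subtreesT s)[d]? := by
  intro N
  induction N using Nat.strong_induction_on with
  | _ N ih =>
  intro L m s hN hm d hd
  rcases L with _ | ⟨⟨a, cs⟩, ts⟩
  · simp [subtreesL_nil] at hm
  rcases Nat.eq_zero_or_pos m with h0 | h0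
  · subst h0
    simp only [subtreesL_cons, subtreesT_node, List.cons_append, List.getElem?_cons_zero,
      Option.some_inj] at hm
    subst hm
    rw [show subtreesL (PTree.node a cs :: ts)
        = subtreesT (PTree.node a cs) ++ subtreesL ts from by simp]
    rw [Nat.zero_add, List.getElem?_append_left (by rw [length_subtreesT]; exact hd)]
  · obtain ⟨m', rfl⟩ : ∃ m', m = m' + 1 := ⟨m - 1, by omega⟩
    have hL : subtreesL (PTree.node a cs :: ts)
        = PTree.node a cs :: subtreesL (cs ++ ts) := by simp
    rw [hL, List.getElem?_cons_succ] at hm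
    rw [hL, show m' + 1 + d = (m' + d) + 1 from by omega, List.getElem?_cons_succ]
    exact ih (sizeL (cs ++ ts)) (by simp only [sizeL_cons, sizeL_append, size_node] at hN ⊢; omega)
      (cs ++ ts) m' s le_rfl hm d hd

lemma ancestor_nest (F : Forest α) (k i : ℕ) (tk ti : PTree α)
    (hk : treeAt F k = some tk) (hi : treeAt F i = some ti)
    (h1 : k < i) (h2 : i < k + size tk) (hk1 : 1 ≤ k) :
    i + size ti ≤ k + size tk := by
  unfold treeAt preorder at hk hi
  have hd : (subtreesL F)[(k-1) + (i - k)]? = (subtreesT tk)[i - k]? :=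
    slice_aux (sizeL F) F (k-1) tk le_rfl hk (i - k) (by omega)
  rw [show (k-1) + (i-k) = i - 1 from by omega, hi] at hd
  obtain ⟨ak, csk⟩ := tk
  rw [subtreesT_node] at hd
  obtain ⟨d', hd'⟩ : ∃ d', i - k = d' + 1 := ⟨i - k - 1, by omega⟩
  rw [hd', List.getElem?_cons_succ] at hd
  have := nest_aux (sizeL csk) csk d' ti le_rfl hd.symm
  simp only [size_node] at h2 ⊢
  omega

/-! ### Computation lemmas for `subAux` -/

lemma subAux_nil (i j k : ℕ) : subAux ([] : Forest α) i j k = ([], k) := by rw [subAux]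

lemma subAux_cons_high (a : α) (cs ts : Forest α) (i j k : ℕ) (h : j < k + 1) :
    subAux (PTree.node a cs :: ts) i j k = ([], k + 1) := by
  rw [subAux, if_pos (by omega)]

lemma subAux_cons_keep (a : α) (cs ts : Forest α) (i j k : ℕ) (h1 : k + 1 ≤ j)
    (h2 : i ≤ k + 1) :
    subAux (PTree.node a cs :: ts) i j k =
      (PTree.node a (subAux cs i j (k+1)).1 :: (subAux ts i j (subAux cs i j (k+1)).2).1,
        (subAux ts i j (subAux cs i j (k+1)).2).2) := by
  rw [subAux, if_neg (by omega), if_pos (by omega)]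

lemma subAux_cons_drop (a : α) (cs ts : Forest α) (i j k : ℕ) (h1 : k + 1 ≤ j)
    (h2 : k + 1 < i) :
    subAux (PTree.node a cs :: ts) i j k =
      ((subAux cs i j (k+1)).1 ++ (subAux ts i j (subAux cs i j (k+1)).2).1,
        (subAux ts i j (subAux cs i j (k+1)).2).2) := by
  rw [subAux, if_neg (by omega), if_neg (by omega)]

lemma subAux_past (F : Forest α) (i j k : ℕ) (h : j ≤ k) :
    (subAux F i j k).1 = [] ∧ k ≤ (subAux F i j k).2 := by
  rcases F with _ | ⟨⟨a, cs⟩, ts⟩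
  · rw [subAux_nil]; exact ⟨rfl, le_rfl⟩
  · rw [subAux_cons_high a cs ts i j k (by omega)]
    exact ⟨rfl, by omega⟩

lemma subAux_snd_formula (a : α) (cs ts : Forest α) (i j k : ℕ) (h1 : k + 1 ≤ j) :
    (subAux (PTree.node a cs :: ts) i j k).2 =
      (subAux ts i j (subAux cs i j (k+1)).2).2 := by
  by_cases h2 : i ≤ k + 1
  · rw [subAux_cons_keep a cs ts i j k h1 h2]
  · rw [subAux_cons_drop a cs ts i j k h1 (by omega)]

lemma subAux_snd_ge_aux : ∀ N : ℕ, ∀ (F : Forest α) (i j k : ℕ), sizeL F ≤ N →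
    k ≤ (subAux F i j k).2 := by
  intro N
  induction N using Nat.strong_induction_on with
  | _ N ih =>
  intro F i j k hN
  rcases F with _ | ⟨⟨a, cs⟩, ts⟩
  · rw [subAux_nil]
  by_cases h1 : k + 1 ≤ j
  · rw [subAux_snd_formula a cs ts i j k h1]
    have e1 : k + 1 ≤ (subAux cs i j (k+1)).2 :=
      ih (sizeL cs) (by simp only [sizeL_cons, size_node] at hN; omega) cs i j (k+1) le_rfl
    have e2 : (subAux cs i j (k+1)).2 ≤ (subAux ts i j (subAux cs i j (k+1)).2).2 :=
      ih (sizeL ts) (by simp only [sizeL_cons, size_node] at hN; omega) ts i j _ le_rfl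
    omega
  · rw [subAux_cons_high a cs ts i j k (by omega)]
    omega

lemma subAux_snd_ge (F : Forest α) (i j k : ℕ) : k ≤ (subAux F i j k).2 :=
  subAux_snd_ge_aux (sizeL F) F i j k le_rfl

lemma subAux_snd_le_aux : ∀ N : ℕ, ∀ (F : Forest α) (i j k : ℕ), sizeL F ≤ N →
    k + sizeL F ≤ j → (subAux F i j k).2 = k + sizeL F := by
  intro N
  induction N using Nat.strong_induction_on with
  | _ N ih =>
  intro F i j k hN hj
  rcases F with _ | ⟨⟨a, cs⟩, ts⟩
  · rw [subAux_nil]; simp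
  have hs : 1 ≤ size (PTree.node a cs) := size_pos _
  simp only [sizeL_cons, size_node] at hj hN hs ⊢
  rw [subAux_snd_formula a cs ts i j k (by omega)]
  have e1 : (subAux cs i j (k+1)).2 = (k+1) + sizeL cs :=
    ih (sizeL cs) (by omega) cs i j (k+1) le_rfl (by omega)
  rw [e1]
  have e2 : (subAux ts i j (k + 1 + sizeL cs)).2 = (k + 1 + sizeL cs) + sizeL ts :=
    ih (sizeL ts) (by omega) ts i j _ le_rfl (by omega)
  rw [e2]
  omega

lemma subAux_snd_le (F : Forest α) (i j k : ℕ) (hj : k + sizeL F ≤ j) :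
    (subAux F i j k).2 = k + sizeL F :=
  subAux_snd_le_aux (sizeL F) F i j k le_rfl hj

lemma subAux_snd_irrel_aux : ∀ N : ℕ, ∀ (F : Forest α) (i i' j k : ℕ), sizeL F ≤ N →
    (subAux F i j k).2 = (subAux F i' j k).2 := by
  intro N
  induction N using Nat.strong_induction_on with
  | _ N ih =>
  intro F i i' j k hN
  rcases F with _ | ⟨⟨a, cs⟩, ts⟩
  · rw [subAux_nil, subAux_nil]
  by_cases h1 : k + 1 ≤ j
  · rw [subAux_snd_formula a cs ts i j k h1, subAux_snd_formula a cs ts i' j k h1]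
    have e1 : (subAux cs i j (k+1)).2 = (subAux cs i' j (k+1)).2 :=
      ih (sizeL cs) (by simp only [sizeL_cons, size_node] at hN; omega) cs i i' j (k+1) le_rfl
    rw [e1]
    exact ih (sizeL ts) (by simp only [sizeL_cons, size_node] at hN; omega) ts i i' j _ le_rfl
  · rw [subAux_cons_high a cs ts i j k (by omega), subAux_cons_high a cs ts i' j k (by omega)]

lemma subAux_snd_irrel (F : Forest α) (i i' j k : ℕ) :
    (subAux F i j k).2 = (subAux F i' j k).2 :=
  subAux_snd_irrel_aux (sizeL F) F i i' j k le_rfl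

lemma subAux_snd_cases_aux : ∀ N : ℕ, ∀ (F : Forest α) (i j k : ℕ), sizeL F ≤ N →
    (subAux F i j k).2 = k + sizeL F ∨ j < (subAux F i j k).2 := by
  intro N
  induction N using Nat.strong_induction_on with
  | _ N ih =>
  intro F i j k hN
  rcases F with _ | ⟨⟨a, cs⟩, ts⟩
  · rw [subAux_nil]; left; simp
  by_cases h1 : k + 1 ≤ j
  · rw [subAux_snd_formula a cs ts i j k h1]
    rcases ih (sizeL cs) (by simp only [sizeL_cons, size_node] at hN; omega) cs i j (k+1) le_rfl
      with hP | hP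
    · rcases ih (sizeL ts) (by simp only [sizeL_cons, size_node] at hN; omega) ts i j
        ((subAux cs i j (k+1)).2) le_rfl with hQ | hQ
      · left
        rw [hQ, hP]
        simp only [sizeL_cons, size_node]
        omega
      · right; exact hQ
    · right
      have := subAux_snd_ge ts i j ((subAux cs i j (k+1)).2)
      omega
  · rw [subAux_cons_high a cs ts i j k (by omega)]
    right
    omega

lemma subAux_snd_cases (F : Forest α) (i j k : ℕ) :
    (subAux F i j k).2 = k + sizeL F ∨ j < (subAux F i j k).2 :=
  subAux_snd_cases_aux (sizeL F) F i j k le_rfl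

lemma subAux_all_aux : ∀ N : ℕ, ∀ (F : Forest α) (i j k : ℕ), sizeL F ≤ N →
    i ≤ k + 1 → k + sizeL F ≤ j → (subAux F i j k).1 = F := by
  intro N
  induction N using Nat.strong_induction_on with
  | _ N ih =>
  intro F i j k hN hi hj
  rcases F with _ | ⟨⟨a, cs⟩, ts⟩
  · rw [subAux_nil]
  have hs : 1 ≤ size (PTree.node a cs) := size_pos _
  simp only [sizeL_cons, size_node] at hj hN hs
  rw [subAux_cons_keep a cs ts i j k (by omega) hi]
  have e1 : (subAux cs i j (k+1)).1 = cs :=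
    ih (sizeL cs) (by omega) cs i j (k+1) le_rfl (by omega) (by omega)
  have e2 : (subAux cs i j (k+1)).2 = (k+1) + sizeL cs :=
    subAux_snd_le cs i j (k+1) (by omega)
  have e3 : (subAux ts i j (k+1+sizeL cs)).1 = ts :=
    ih (sizeL ts) (by omega) ts i j _ le_rfl (by omega) (by omega)
  rw [e1, e2, e3]

lemma subAux_all (F : Forest α) (i j k : ℕ) (hi : i ≤ k + 1) (hj : k + sizeL F ≤ j) :
    (subAux F i j k).1 = F :=
  subAux_all_aux (sizeL F) F i j k le_rfl hi hj

lemma subAux_before_aux : ∀ N : ℕ, ∀ (F : Forest α) (i j k : ℕ), sizeL F ≤ N →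
    k + sizeL F < i → (subAux F i j k).1 = [] := by
  intro N
  induction N using Nat.strong_induction_on with
  | _ N ih =>
  intro F i j k hN hi
  rcases F with _ | ⟨⟨a, cs⟩, ts⟩
  · rw [subAux_nil]
  have hs : 1 ≤ size (PTree.node a cs) := size_pos _
  simp only [sizeL_cons, size_node] at hi hN hs
  by_cases h1 : k + 1 ≤ j
  · rw [subAux_cons_drop a cs ts i j k h1 (by omega)]
    have e1 : (subAux cs i j (k+1)).1 = [] :=
      ih (sizeL cs) (by omega) cs i j (k+1) le_rfl (by omega)
    have e3 : (subAux ts i j ((subAux cs i j (k+1)).2)).1 = [] := by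
      rcases subAux_snd_cases cs i j (k+1) with hP | hP
      · rw [hP]
        exact ih (sizeL ts) (by omega) ts i j _ le_rfl (by omega)
      · exact (subAux_past ts i j _ (by omega)).1
    rw [e1, e3]
    rfl
  · rw [subAux_cons_high a cs ts i j k (by omega)]

lemma subAux_before (F : Forest α) (i j k : ℕ) (hi : k + sizeL F < i) :
    (subAux F i j k).1 = [] :=
  subAux_before_aux (sizeL F) F i j k le_rfl hi

lemma subAux_irrel_aux : ∀ N : ℕ, ∀ (F : Forest α) (i i' j k : ℕ), sizeL F ≤ N →
    i ≤ k + 1 → i' ≤ k + 1 → subAux F i j k = subAux F i' j k := by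
  intro N
  induction N using Nat.strong_induction_on with
  | _ N ih =>
  intro F i i' j k hN hi hi'
  rcases F with _ | ⟨⟨a, cs⟩, ts⟩
  · rw [subAux_nil, subAux_nil]
  by_cases h1 : k + 1 ≤ j
  · rw [subAux_cons_keep a cs ts i j k h1 hi, subAux_cons_keep a cs ts i' j k h1 hi']
    have e1 : subAux cs i j (k+1) = subAux cs i' j (k+1) :=
      ih (sizeL cs) (by simp only [sizeL_cons, size_node] at hN; omega) cs i i' j (k+1) le_rfl
        (by omega) (by omega)
    rw [e1]
    have hge := subAux_snd_ge cs i' j (k+1)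
    have e2 : subAux ts i j ((subAux cs i' j (k+1)).2)
        = subAux ts i' j ((subAux cs i' j (k+1)).2) :=
      ih (sizeL ts) (by simp only [sizeL_cons, size_node] at hN; omega) ts i i' j _ le_rfl
        (by omega) (by omega)
    rw [e2]
  · rw [subAux_cons_high a cs ts i j k (by omega), subAux_cons_high a cs ts i' j k (by omega)]

lemma subAux_irrel (F : Forest α) (i i' j k : ℕ) (hi : i ≤ k + 1) (hi' : i' ≤ k + 1) :
    subAux F i j k = subAux F i' j k :=
  subAux_irrel_aux (sizeL F) F i i' j k le_rfl hi hi'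

/-! ### Structure of subforests -/

lemma sub_main_aux : ∀ N : ℕ, ∀ (F : Forest α) (i j k : ℕ) (s : PTree α), sizeL F ≤ N →
    k < i → (subtreesL F)[i - k - 1]? = some s → i + size s - 1 ≤ j →
    (subAux F i j k).1 = s :: (subAux F (i + size s) j k).1 := by
  intro N
  induction N using Nat.strong_induction_on with
  | _ N ih =>
  intro F i j k s hN hik hm hj
  rcases F with _ | ⟨⟨a, cs⟩, ts⟩
  · rw [subtreesL_nil] at hm; simp at hm
  have hss : 1 ≤ size s := size_pos s
  rw [show subtreesL (PTree.node a cs :: ts)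
      = PTree.node a cs :: (subtreesL cs ++ subtreesL ts) from by simp] at hm
  simp only [sizeL_cons, size_node] at hN
  rcases Nat.eq_or_lt_of_le (show k + 1 ≤ i from hik) with hi1 | hi1
  · -- i = k + 1, s is the first tree
    rw [show i - k - 1 = 0 from by omega, List.getElem?_cons_zero, Option.some_inj] at hm
    have hjk : k + size s ≤ j := by omega
    have hsz : size s = 1 + sizeL cs := by rw [← hm, size_node]
    rw [subAux_cons_keep a cs ts i j k (by omega) (by omega)]
    have e1 : (subAux cs i j (k+1)).1 = cs := subAux_all cs i j (k+1) (by omega) (by omega)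
    have e2 : (subAux cs i j (k+1)).2 = k + size s := by
      rw [subAux_snd_le cs i j (k+1) (by omega)]; omega
    rw [subAux_cons_drop a cs ts (i + size s) j k (by omega) (by omega)]
    have e3 : (subAux cs (i + size s) j (k+1)).1 = [] :=
      subAux_before cs (i + size s) j (k+1) (by omega)
    have e4 : (subAux cs (i + size s) j (k+1)).2 = k + size s := by
      rw [subAux_snd_le cs (i + size s) j (k+1) (by omega)]; omega
    rw [e1, e2, e3, e4]
    have e5 : subAux ts i j (k + size s) = subAux ts (i + size s) j (k + size s) :=
      subAux_irrel ts i (i + size s) j (k + size s) (by omega) (by omega)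
    rw [e5, ← hm]
    rfl
  · -- i ≥ k + 2
    rw [show i - k - 1 = (i - k - 2) + 1 from by omega, List.getElem?_cons_succ] at hm
    have h1j : k + 1 ≤ j := by omega
    by_cases hreg : i - k - 2 < (subtreesL cs).length
    · -- s lies in cs
      rw [List.getElem?_append_left hreg] at hm
      rw [length_subtreesL] at hreg
      have hnest : (i - k - 2) + size s ≤ sizeL cs :=
        nest_aux (sizeL cs) cs (i - k - 2) s le_rfl hm
      have hm' : (subtreesL cs)[i - (k+1) - 1]? = some s := by
        rw [show i - (k+1) - 1 = i - k - 2 from by omega]; exact hm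
      have e1 : (subAux cs i j (k+1)).1 = s :: (subAux cs (i + size s) j (k+1)).1 :=
        ih (sizeL cs) (by omega) cs i j (k+1) s le_rfl (by omega) hm' hj
      rw [subAux_cons_drop a cs ts i j k h1j (by omega),
        subAux_cons_drop a cs ts (i + size s) j k h1j (by omega)]
      have e2 : (subAux cs i j (k+1)).2 = (subAux cs (i + size s) j (k+1)).2 :=
        subAux_snd_irrel cs i (i + size s) j (k+1)
      have e3 : (subAux ts i j ((subAux cs (i + size s) j (k+1)).2)).1
          = (subAux ts (i + size s) j ((subAux cs (i + size s) j (k+1)).2)).1 := by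
        rcases subAux_snd_cases cs (i + size s) j (k+1) with hc | hc
        · have : subAux ts i j ((subAux cs (i + size s) j (k+1)).2)
              = subAux ts (i + size s) j ((subAux cs (i + size s) j (k+1)).2) :=
            subAux_irrel ts i (i + size s) j _ (by omega) (by omega)
          rw [this]
        · rw [(subAux_past ts i j _ (by omega)).1, (subAux_past ts (i + size s) j _ (by omega)).1]
      rw [e2, e1, e3]
      rfl
    · -- s lies in ts
      rw [List.getElem?_append_right (by omega), length_subtreesL] at hm
      rw [length_subtreesL] at hreg
      have hm' : (subtreesL ts)[i - (k + 1 + sizeL cs) - 1]? = some s := by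
        rw [show i - (k + 1 + sizeL cs) - 1 = i - k - 2 - sizeL cs from by omega]; exact hm
      have hk2i : k + 1 + sizeL cs < i := by omega
      rw [subAux_cons_drop a cs ts i j k h1j (by omega),
        subAux_cons_drop a cs ts (i + size s) j k h1j (by omega)]
      have e1 : (subAux cs i j (k+1)).1 = [] := subAux_before cs i j (k+1) (by omega)
      have e2 : (subAux cs i j (k+1)).2 = k + 1 + sizeL cs := by
        rw [subAux_snd_le cs i j (k+1) (by omega)]
      have e3 : (subAux cs (i + size s) j (k+1)).1 = [] :=
        subAux_before cs (i + size s) j (k+1) (by omega)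
      have e4 : (subAux cs (i + size s) j (k+1)).2 = k + 1 + sizeL cs := by
        rw [subAux_snd_le cs (i + size s) j (k+1) (by omega)]
      have e5 : (subAux ts i j (k + 1 + sizeL cs)).1
          = s :: (subAux ts (i + size s) j (k + 1 + sizeL cs)).1 :=
        ih (sizeL ts) (by omega) ts i j (k + 1 + sizeL cs) s le_rfl (by omega) hm' hj
      rw [e1, e2, e3, e4, e5]
      rfl

lemma sub_child_aux : ∀ N : ℕ, ∀ (F : Forest α) (i k : ℕ) (s : PTree α), sizeL F ≤ N →
    k < i → (subtreesL F)[i - k - 1]? = some s →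
    (subAux F (i+1) (i + size s - 1) k).1 = children s := by
  intro N
  induction N using Nat.strong_induction_on with
  | _ N ih =>
  intro F i k s hN hik hm
  rcases F with _ | ⟨⟨a, cs⟩, ts⟩
  · rw [subtreesL_nil] at hm; simp at hm
  have hss : 1 ≤ size s := size_pos s
  rw [show subtreesL (PTree.node a cs :: ts)
      = PTree.node a cs :: (subtreesL cs ++ subtreesL ts) from by simp] at hm
  simp only [sizeL_cons, size_node] at hN
  rcases Nat.eq_or_lt_of_le (show k + 1 ≤ i from hik) with hi1 | hi1
  · rw [show i - k - 1 = 0 from by omega, List.getElem?_cons_zero, Option.some_inj] at hm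
    have hsz : size s = 1 + sizeL cs := by rw [← hm, size_node]
    rw [subAux_cons_drop a cs ts (i+1) (i + size s - 1) k (by omega) (by omega)]
    have e1 : (subAux cs (i+1) (i + size s - 1) (k+1)).1 = cs :=
      subAux_all cs (i+1) (i + size s - 1) (k+1) (by omega) (by omega)
    have e2 : (subAux cs (i+1) (i + size s - 1) (k+1)).2 = i + size s - 1 := by
      rw [subAux_snd_le cs (i+1) (i + size s - 1) (k+1) (by omega)]; omega
    have e3 : (subAux ts (i+1) (i + size s - 1) (i + size s - 1)).1 = [] :=
      (subAux_past ts (i+1) (i + size s - 1) (i + size s - 1) le_rfl).1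
    rw [e1, e2, e3, ← hm]
    show cs ++ [] = cs
    simp
  · rw [show i - k - 1 = (i - k - 2) + 1 from by omega, List.getElem?_cons_succ] at hm
    have h1j : k + 1 ≤ i + size s - 1 := by omega
    by_cases hreg : i - k - 2 < (subtreesL cs).length
    · rw [List.getElem?_append_left hreg] at hm
      rw [length_subtreesL] at hreg
      have hnest : (i - k - 2) + size s ≤ sizeL cs :=
        nest_aux (sizeL cs) cs (i - k - 2) s le_rfl hm
      have hm' : (subtreesL cs)[i - (k+1) - 1]? = some s := by
        rw [show i - (k+1) - 1 = i - k - 2 from by omega]; exact hm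
      rw [subAux_cons_drop a cs ts (i+1) (i + size s - 1) k h1j (by omega)]
      have e1 : (subAux cs (i+1) (i + size s - 1) (k+1)).1 = children s :=
        ih (sizeL cs) (by omega) cs i (k+1) s le_rfl (by omega) hm'
      have e3 : (subAux ts (i+1) (i + size s - 1) ((subAux cs (i+1) (i + size s - 1) (k+1)).2)).1
          = [] := by
        have hd := subAux_snd_cases cs (i+1) (i + size s - 1) (k+1)
        refine (subAux_past ts (i+1) (i + size s - 1) _ ?_).1
        rcases hd with hc | hc <;> omega
      rw [e1, e3]
      simp
    · rw [List.getElem?_append_right (by omega), length_subtreesL] at hm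
      rw [length_subtreesL] at hreg
      have hm' : (subtreesL ts)[i - (k + 1 + sizeL cs) - 1]? = some s := by
        rw [show i - (k + 1 + sizeL cs) - 1 = i - k - 2 - sizeL cs from by omega]; exact hm
      have hk2i : k + 1 + sizeL cs < i := by omega
      rw [subAux_cons_drop a cs ts (i+1) (i + size s - 1) k h1j (by omega)]
      have e1 : (subAux cs (i+1) (i + size s - 1) (k+1)).1 = [] :=
        subAux_before cs (i+1) (i + size s - 1) (k+1) (by omega)
      have e2 : (subAux cs (i+1) (i + size s - 1) (k+1)).2 = k + 1 + sizeL cs := by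
        rw [subAux_snd_le cs (i+1) (i + size s - 1) (k+1) (by omega)]
      have e5 : (subAux ts (i+1) (i + size s - 1) (k + 1 + sizeL cs)).1 = children s :=
        ih (sizeL ts) (by omega) ts i (k + 1 + sizeL cs) s le_rfl (by omega) hm'
      rw [e1, e2, e5]
      rfl

lemma sub_del_aux : ∀ N : ℕ, ∀ (F : Forest α) (i j k : ℕ) (s : PTree α), sizeL F ≤ N →
    k < i → (subtreesL F)[i - k - 1]? = some s → i + size s - 1 ≤ j →
    (subAux F (i+1) j k).1 = children s ++ (subAux F (i + size s) j k).1 := by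
  intro N
  induction N using Nat.strong_induction_on with
  | _ N ih =>
  intro F i j k s hN hik hm hj
  rcases F with _ | ⟨⟨a, cs⟩, ts⟩
  · rw [subtreesL_nil] at hm; simp at hm
  have hss : 1 ≤ size s := size_pos s
  rw [show subtreesL (PTree.node a cs :: ts)
      = PTree.node a cs :: (subtreesL cs ++ subtreesL ts) from by simp] at hm
  simp only [sizeL_cons, size_node] at hN
  rcases Nat.eq_or_lt_of_le (show k + 1 ≤ i from hik) with hi1 | hi1
  · rw [show i - k - 1 = 0 from by omega, List.getElem?_cons_zero, Option.some_inj] at hm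
    have hsz : size s = 1 + sizeL cs := by rw [← hm, size_node]
    rw [subAux_cons_drop a cs ts (i+1) j k (by omega) (by omega),
      subAux_cons_drop a cs ts (i + size s) j k (by omega) (by omega)]
    have e1 : (subAux cs (i+1) j (k+1)).1 = cs :=
      subAux_all cs (i+1) j (k+1) (by omega) (by omega)
    have e2 : (subAux cs (i+1) j (k+1)).2 = k + size s := by
      rw [subAux_snd_le cs (i+1) j (k+1) (by omega)]; omega
    have e3 : (subAux cs (i + size s) j (k+1)).1 = [] :=
      subAux_before cs (i + size s) j (k+1) (by omega)
    have e4 : (subAux cs (i + size s) j (k+1)).2 = k + size s := by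
      rw [subAux_snd_le cs (i + size s) j (k+1) (by omega)]; omega
    have e5 : subAux ts (i+1) j (k + size s) = subAux ts (i + size s) j (k + size s) :=
      subAux_irrel ts (i+1) (i + size s) j (k + size s) (by omega) (by omega)
    rw [e1, e2, e3, e4, e5, ← hm]
    rfl
  · rw [show i - k - 1 = (i - k - 2) + 1 from by omega, List.getElem?_cons_succ] at hm
    have h1j : k + 1 ≤ j := by omega
    by_cases hreg : i - k - 2 < (subtreesL cs).length
    · rw [List.getElem?_append_left hreg] at hm
      rw [length_subtreesL] at hreg
      have hnest : (i - k - 2) + size s ≤ sizeL cs :=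
        nest_aux (sizeL cs) cs (i - k - 2) s le_rfl hm
      have hm' : (subtreesL cs)[i - (k+1) - 1]? = some s := by
        rw [show i - (k+1) - 1 = i - k - 2 from by omega]; exact hm
      rw [subAux_cons_drop a cs ts (i+1) j k h1j (by omega),
        subAux_cons_drop a cs ts (i + size s) j k h1j (by omega)]
      have e1 : (subAux cs (i+1) j (k+1)).1
          = children s ++ (subAux cs (i + size s) j (k+1)).1 :=
        ih (sizeL cs) (by omega) cs i j (k+1) s le_rfl (by omega) hm' hj
      have e2 : (subAux cs (i+1) j (k+1)).2 = (subAux cs (i + size s) j (k+1)).2 :=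
        subAux_snd_irrel cs (i+1) (i + size s) j (k+1)
      have e3 : (subAux ts (i+1) j ((subAux cs (i + size s) j (k+1)).2)).1
          = (subAux ts (i + size s) j ((subAux cs (i + size s) j (k+1)).2)).1 := by
        rcases subAux_snd_cases cs (i + size s) j (k+1) with hc | hc
        · have : subAux ts (i+1) j ((subAux cs (i + size s) j (k+1)).2)
              = subAux ts (i + size s) j ((subAux cs (i + size s) j (k+1)).2) :=
            subAux_irrel ts (i+1) (i + size s) j _ (by omega) (by omega)
          rw [this]
        · rw [(subAux_past ts (i+1) j _ (by omega)).1,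
            (subAux_past ts (i + size s) j _ (by omega)).1]
      rw [e2, e1, e3, List.append_assoc]
    · rw [List.getElem?_append_right (by omega), length_subtreesL] at hm
      rw [length_subtreesL] at hreg
      have hm' : (subtreesL ts)[i - (k + 1 + sizeL cs) - 1]? = some s := by
        rw [show i - (k + 1 + sizeL cs) - 1 = i - k - 2 - sizeL cs from by omega]; exact hm
      have hk2i : k + 1 + sizeL cs < i := by omega
      rw [subAux_cons_drop a cs ts (i+1) j k h1j (by omega),
        subAux_cons_drop a cs ts (i + size s) j k h1j (by omega)]
      have e1 : (subAux cs (i+1) j (k+1)).1 = [] := subAux_before cs (i+1) j (k+1) (by omega)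
      have e2 : (subAux cs (i+1) j (k+1)).2 = k + 1 + sizeL cs := by
        rw [subAux_snd_le cs (i+1) j (k+1) (by omega)]
      have e3 : (subAux cs (i + size s) j (k+1)).1 = [] :=
        subAux_before cs (i + size s) j (k+1) (by omega)
      have e4 : (subAux cs (i + size s) j (k+1)).2 = k + 1 + sizeL cs := by
        rw [subAux_snd_le cs (i + size s) j (k+1) (by omega)]
      have e5 : (subAux ts (i+1) j (k + 1 + sizeL cs)).1
          = children s ++ (subAux ts (i + size s) j (k + 1 + sizeL cs)).1 :=
        ih (sizeL ts) (by omega) ts i j (k + 1 + sizeL cs) s le_rfl (by omega) hm' hj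
      rw [e1, e2, e3, e4, e5]
      rfl

lemma treeAt_eq_getElem (F : Forest α) (i : ℕ) : treeAt F i = (subtreesL F)[i - 1]? := rfl

lemma subforest_main (F : Forest α) (i j : ℕ) (s : PTree α) (h1 : 1 ≤ i)
    (hm : treeAt F i = some s) (hj : i + size s - 1 ≤ j) :
    subforest F i j = s :: subforest F (i + size s) j := by
  unfold subforest
  exact sub_main_aux (sizeL F) F i j 0 s le_rfl (by omega)
    (by rw [show i - 0 - 1 = i - 1 from by omega]; exact hm) hj

lemma subforest_child (F : Forest α) (i : ℕ) (s : PTree α) (h1 : 1 ≤ i)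
    (hm : treeAt F i = some s) :
    subforest F (i+1) (i + size s - 1) = children s := by
  unfold subforest
  exact sub_child_aux (sizeL F) F i 0 s le_rfl (by omega)
    (by rw [show i - 0 - 1 = i - 1 from by omega]; exact hm)

lemma subforest_del (F : Forest α) (i j : ℕ) (s : PTree α) (h1 : 1 ≤ i)
    (hm : treeAt F i = some s) (hj : i + size s - 1 ≤ j) :
    subforest F (i+1) j = children s ++ subforest F (i + size s) j := by
  unfold subforest
  exact sub_del_aux (sizeL F) F i j 0 s le_rfl (by omega)
    (by rw [show i - 0 - 1 = i - 1 from by omega]; exact hm) hj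


end Dev
/-- The intermediate decomposition of the subforest edit distance:
for `x̄_k` an ancestor of (or equal to) `x̄_i` and `ȳ_l` an ancestor of (or equal to)
`ȳ_j`, the distance `D_c(X[i, rl_X(k)], Y[j, rl_Y(l)])` decomposes into deletion,
insertion, and replacement-with-split options. -/
theorem fdist_intermediate_decomposition {α : Type} (c : Cost α) (hnn : Nonneg c) (hse : SelfEq c)
    (htr : Triangle c) (F G : Forest α) (hF : F ≠ []) (hG : G ≠ [])
    (i k : ℕ) (hi1 : 1 ≤ i) (hi2 : i ≤ fsize F) (hk1 : 1 ≤ k) (hk2 : k ≤ fsize F)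
    (hki : k = i ∨ AncestorIdx F k i)
    (j l : ℕ) (hj1 : 1 ≤ j) (hj2 : j ≤ fsize G) (hl1 : 1 ≤ l) (hl2 : l ≤ fsize G)
    (hlj : l = j ∨ AncestorIdx G l j) :
    fdist c (subforest F i (rlAt F k)) (subforest G j (rlAt G l)) =
      min (c (labelAt F i) none +
            fdist c (subforest F (i + 1) (rlAt F k)) (subforest G j (rlAt G l)))
        (min (c none (labelAt G j) +
            fdist c (subforest F i (rlAt F k)) (subforest G (j + 1) (rlAt G l)))
          (c (labelAt F i) (labelAt G j) +
            fdist c (subforest F (i + 1) (rlAt F i)) (subforest G (j + 1) (rlAt G j)) +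
            fdist c (subforest F (rlAt F i + 1) (rlAt F k))
              (subforest G (rlAt G j + 1) (rlAt G l)))) := by
  obtain ⟨ti, hti⟩ := treeAt_isSome F i hi1 hi2
  obtain ⟨tk, htk⟩ := treeAt_isSome F k hk1 hk2
  obtain ⟨tj, htj⟩ := treeAt_isSome G j hj1 hj2
  obtain ⟨tl, htl⟩ := treeAt_isSome G l hl1 hl2
  have hsti : 1 ≤ size ti := size_pos ti
  have hstk : 1 ≤ size tk := size_pos tk
  have hstj : 1 ≤ size tj := size_pos tj
  have hstl : 1 ≤ size tl := size_pos tl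
  have hrlk : rlAt F k = k + size tk - 1 := rlAt_eq F k tk htk
  have hrli : rlAt F i = i + size ti - 1 := rlAt_eq F i ti hti
  have hrll : rlAt G l = l + size tl - 1 := rlAt_eq G l tl htl
  have hrlj : rlAt G j = j + size tj - 1 := rlAt_eq G j tj htj
  have hkle : k ≤ i := by
    rcases hki with he | ha
    · omega
    · exact le_of_lt ha.1
  have hlle : l ≤ j := by
    rcases hlj with he | ha
    · omega
    · exact le_of_lt ha.1
  have hnestF : i + size ti ≤ k + size tk := by
    rcases hki with he | ha
    · subst he
      have : ti = tk := by rw [hti] at htk; injection htk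
      omega
    · have hsk : sizeAt F k = size tk := by unfold sizeAt; rw [htk]; rfl
      obtain ⟨ha1, ha2⟩ := ha
      rw [hsk] at ha2
      exact ancestor_nest F k i tk ti htk hti ha1 ha2 hk1
  have hnestG : j + size tj ≤ l + size tl := by
    rcases hlj with he | ha
    · subst he
      have : tj = tl := by rw [htj] at htl; injection htl
      omega
    · have hsl : sizeAt G l = size tl := by unfold sizeAt; rw [htl]; rfl
      obtain ⟨ha1, ha2⟩ := ha
      rw [hsl] at ha2
      exact ancestor_nest G l j tl tj htl htj ha1 ha2 hl1
  have hJF : i + size ti - 1 ≤ rlAt F k := by rw [hrlk]; omega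
  have hJG : j + size tj - 1 ≤ rlAt G l := by rw [hrll]; omega
  have hmainF : subforest F i (rlAt F k) = ti :: subforest F (i + size ti) (rlAt F k) :=
    subforest_main F i (rlAt F k) ti hi1 hti hJF
  have hmainG : subforest G j (rlAt G l) = tj :: subforest G (j + size tj) (rlAt G l) :=
    subforest_main G j (rlAt G l) tj hj1 htj hJG
  have hchildF : subforest F (i + 1) (rlAt F i) = children ti := by
    rw [hrli]
    exact subforest_child F i ti hi1 hti
  have hchildG : subforest G (j + 1) (rlAt G j) = children tj := by
    rw [hrlj]
    exact subforest_child G j tj hj1 htj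
  have hdelF : subforest F (i + 1) (rlAt F k)
      = children ti ++ subforest F (i + size ti) (rlAt F k) :=
    subforest_del F i (rlAt F k) ti hi1 hti hJF
  have hdelG : subforest G (j + 1) (rlAt G l)
      = children tj ++ subforest G (j + size tj) (rlAt G l) :=
    subforest_del G j (rlAt G l) tj hj1 htj hJG
  have hrestF : rlAt F i + 1 = i + size ti := by rw [hrli]; omega
  have hrestG : rlAt G j + 1 = j + size tj := by rw [hrlj]; omega
  have hlabF : labelAt F i = some (label ti) := by unfold labelAt; rw [hti]; rfl
  have hlabG : labelAt G j = some (label tj) := by unfold labelAt; rw [htj]; rfl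
  obtain ⟨ai, csi⟩ := ti
  obtain ⟨bj, dsj⟩ := tj
  rw [hmainF, hmainG, hdelF, hdelG, hchildF, hchildG, hrestF, hrestG, hlabF, hlabG]
  simp only [fdist_eq_dd c hnn hse htr]
  rw [show label (PTree.node ai csi) = ai from rfl, show label (PTree.node bj dsj) = bj from rfl,
    show children (PTree.node ai csi) = csi from rfl,
    show children (PTree.node bj dsj) = dsj from rfl]
  rw [dd_cons_cons]

end TED
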